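/- arXiv:1101.3915 — 8 statements merged into one kernel-verified Lean document; each statement's English description precedes it below -/
import Mathlib

section
/- For every real s' > 8, setting Δ = s' + 2 − 2√(s'+1), one has √(s'+1) − (1/2)√(Δ·s') < 3 − 2√2 < 1. -/
/-- For `s' > 8`, with `Δ = s' + 2 − 2√(s'+1)`:
`√(s'+1) − (1/2)√(Δ·s') < 3 − 2√2 < 1`. -/
theorem stmt_6 (s' : ℝ) (hs' : 8 < s') :
    Real.sqrt (s' + 1) - (1 / 2) * Real.sqrt ((s' + 2 - 2 * Real.sqrt (s' + 1)) * s')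
      < 3 - 2 * Real.sqrt 2 ∧
    3 - 2 * Real.sqrt 2 < 1 := by
  have h2 : (1:ℝ) < Real.sqrt 2 := by
    rw [show (1:ℝ) = Real.sqrt 1 by simp]
    exact Real.sqrt_lt_sqrt (by norm_num) (by norm_num)
  set u := Real.sqrt (s' + 1) with hu
  have hu2 : u ^ 2 = s' + 1 := Real.sq_sqrt (by linarith)
  have hu3 : 3 < u := by
    rw [hu]
    rw [show (3:ℝ) = Real.sqrt 9 by
      rw [show (9:ℝ) = 3^2 by norm_num]; exact (Real.sqrt_sq (by norm_num)).symm]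
    exact Real.sqrt_lt_sqrt (by norm_num) (by linarith)
  have hΔ : s' + 2 - 2 * u = (u - 1) ^ 2 := by nlinarith
  have hsq : Real.sqrt ((u - 1) ^ 2 * s') = (u - 1) * Real.sqrt s' := by
    rw [Real.sqrt_mul (sq_nonneg _), Real.sqrt_sq (by linarith)]
  have hs8 : 2 * Real.sqrt 2 < Real.sqrt s' := by
    rw [show (2:ℝ) * Real.sqrt 2 = Real.sqrt 8 by
      rw [show (8:ℝ) = 2^2 * 2 by norm_num, Real.sqrt_mul (by positivity),
        Real.sqrt_sq (by norm_num)]]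
    exact Real.sqrt_lt_sqrt (by norm_num) hs'
  constructor
  · rw [hΔ, hsq]
    nlinarith [mul_lt_mul_of_pos_left hs8 (show (0:ℝ) < u - 1 by linarith)]
  · linarith
end

section
/- Let x0 > θ > 0 and let s' > max(8, 1 + x0²/θ²). Set s* = 2(√(s'+1) − 1) and Δ = s' − s*. Then θ√(s'+1) − x0 > 0 and Δ·s'·θ²/4 > (θ√(s'+1) − x0)²; consequently Δ²·θ²·s' > 4Δ·(θ√(s'+1) − x0)² (i.e., Q1(s') > Q1(s*)). -/
/-- For `x0 > θ > 0` and `s' > max(8, 1 + x0²/θ²)`, with `s* = 2(√(s'+1) − 1)` and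
`Δ = s' − s*`: `θ√(s'+1) − x0 > 0`, `Δ·s'·θ²/4 > (θ√(s'+1) − x0)²`, and consequently
`Δ²θ²s' > 4Δ(θ√(s'+1) − x0)²`, i.e. `Q1(s') > Q1(s*)`. -/
theorem stmt_7 (x0 θ s' : ℝ) (hθ : 0 < θ) (hx0 : θ < x0)
    (hs' : max 8 (1 + x0 ^ 2 / θ ^ 2) < s') :
    0 < θ * Real.sqrt (s' + 1) - x0 ∧
    (s' - 2 * (Real.sqrt (s' + 1) - 1)) * s' * θ ^ 2 / 4 >
      (θ * Real.sqrt (s' + 1) - x0) ^ 2 ∧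
    (s' - 2 * (Real.sqrt (s' + 1) - 1)) ^ 2 * θ ^ 2 * s' >
      4 * (s' - 2 * (Real.sqrt (s' + 1) - 1)) * (θ * Real.sqrt (s' + 1) - x0) ^ 2 := by
  have hs8 : (8:ℝ) < s' := lt_of_le_of_lt (le_max_left _ _) hs'
  have hsx : 1 + x0 ^ 2 / θ ^ 2 < s' := lt_of_le_of_lt (le_max_right _ _) hs'
  set r := Real.sqrt (s' + 1) with hrdef
  have hr2 : r ^ 2 = s' + 1 := Real.sq_sqrt (by linarith)
  have hr1 : 1 < r := by
    nlinarith [Real.sqrt_nonneg (s' + 1)]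
  have hθ2 : (0:ℝ) < θ ^ 2 := by positivity
  have hx2 : x0 ^ 2 < θ ^ 2 * (s' - 1) := by
    have := (div_lt_iff₀ hθ2).mp (by linarith : x0 ^ 2 / θ ^ 2 < s' - 1)
    linarith
  have h1 : 0 < θ * r - x0 := by
    nlinarith [Real.sqrt_nonneg (s' + 1), mul_pos hθ (lt_trans one_pos hr1)]
  have hdelta : s' - 2 * (r - 1) = (r - 1) ^ 2 := by nlinarith
  have h2 : (s' - 2 * (r - 1)) * s' * θ ^ 2 / 4 > (θ * r - x0) ^ 2 := by
    rw [hdelta]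
    have hlt : θ * r - x0 < θ * (r - 1) := by nlinarith
    have hsq : (θ * r - x0) ^ 2 < θ ^ 2 * (r - 1) ^ 2 := by
      nlinarith [mul_pos hθ (sub_pos.mpr hr1)]
    nlinarith [mul_nonneg (mul_nonneg (by linarith : (0:ℝ) ≤ s' / 4 - 1) hθ2.le) (sq_nonneg (r - 1))]
  refine ⟨h1, h2, ?_⟩
  have hdpos : 0 < s' - 2 * (r - 1) := by rw [hdelta]; exact pow_pos (by linarith) 2
  nlinarith [mul_lt_mul_of_pos_left h2 hdpos]
end

section
/- Fix β > 0, σ > 0, x0 > θ > 0, constants 0 < η < ν < 1, and s' > max(8, 1 + x0²/θ²). Set s* = 2(√(s'+1) − 1), Δ = s' − s*, s1 = s* + ηΔ, s2 = s* + νΔ. Define a1 = (θ − x0)√(2β)/σ, b1 = (θ/2)√(2β)/σ, a2 = (√(2β)/σ)(θ√(s'+1) − x0), l1(s) = a1 + b1·s, and Q1(s) = (2σ²/β)(s'·l1(s)² − 2s·l1(s)·a2 + s·a2²). Then max(Q1(s1), Q1(s2)) ≤ Δ²·θ²·s'. -/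
lemma aux_poly (θ x0 r u : ℝ) (hθ : 0 < θ) (hx : θ ≤ x0) (hx0 : x0 < θ * r)
    (hr : 3 < r) (hu0 : 0 ≤ u) (hu1 : u ≤ 1) :
    4 * (1 - u) * (r - 1) ^ 2 * (θ * r - x0) * ((θ * r - x0) + θ * u * (r - 1) ^ 2)
      + (r ^ 2 - 1) * θ ^ 2 * u ^ 2 * ((r - 1) ^ 2) ^ 2
      ≤ ((r - 1) ^ 2) ^ 2 * θ ^ 2 * (r ^ 2 - 1) := by
  set A := θ * r - x0 with hA
  have hA0 : 0 < A := by simp only [hA]; linarith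
  have hA1 : A ≤ θ * (r - 1) := by simp only [hA]; nlinarith
  have hA2 : A ^ 2 ≤ θ ^ 2 * (r - 1) ^ 2 := by nlinarith
  have hΔ0 : (0:ℝ) < (r - 1) ^ 2 := by nlinarith
  have f0 : 4 * A ^ 2 ≤ (r - 1) ^ 2 * θ ^ 2 * (r ^ 2 - 1) := by
    nlinarith [sq_nonneg (r - 1), sq_nonneg θ,
      mul_nonneg (sq_nonneg θ) (sq_nonneg (r - 1))]
  have f1 : 4 * A ^ 2 + 4 * A * θ * (r - 1) ^ 2 ≤ 2 * (r - 1) ^ 2 * θ ^ 2 * (r ^ 2 - 1) := by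
    nlinarith [mul_le_mul_of_nonneg_right hA1 (by positivity : (0:ℝ) ≤ 4 * θ * (r - 1) ^ 2),
      mul_nonneg (mul_nonneg (sq_nonneg θ) hΔ0.le) (by nlinarith : (0:ℝ) ≤ r ^ 2 - 2 * r - 1)]
  have g0 : 0 ≤ (1 - u) ^ 2 * ((r - 1) ^ 2 * θ ^ 2 * (r ^ 2 - 1) - 4 * A ^ 2) :=
    mul_nonneg (sq_nonneg _) (by linarith)
  have g1 : 0 ≤ u * (1 - u) *
      (2 * (r - 1) ^ 2 * θ ^ 2 * (r ^ 2 - 1) - 4 * A ^ 2 - 4 * A * θ * (r - 1) ^ 2) :=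
    mul_nonneg (mul_nonneg hu0 (by linarith)) (by linarith)
  nlinarith [mul_nonneg hΔ0.le g0, mul_nonneg hΔ0.le g1]

/-- For `x0 > θ > 0`, `0 < η < ν < 1`, and `s' > max(8, 1 + x0²/θ²)`:
`max(Q1(s1), Q1(s2)) ≤ Δ²θ²s'` where `s1 = s* + ηΔ`, `s2 = s* + νΔ`. -/
theorem stmt_8 (β σ x0 θ η ν s' : ℝ) (hβ : 0 < β) (hσ : 0 < σ) (hθ : 0 < θ)
    (hx0 : θ < x0) (hη : 0 < η) (hην : η < ν) (hν : ν < 1)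
    (hs' : max 8 (1 + x0 ^ 2 / θ ^ 2) < s')
    (a1 b1 a2 sstar Δ s1 s2 : ℝ) (l1 Q1 : ℝ → ℝ)
    (ha1 : a1 = (θ - x0) * Real.sqrt (2 * β) / σ)
    (hb1 : b1 = (θ / 2) * Real.sqrt (2 * β) / σ)
    (ha2 : a2 = (Real.sqrt (2 * β) / σ) * (θ * Real.sqrt (s' + 1) - x0))
    (hsstar : sstar = 2 * (Real.sqrt (s' + 1) - 1))
    (hΔ : Δ = s' - sstar)
    (hs1 : s1 = sstar + η * Δ)
    (hs2 : s2 = sstar + ν * Δ)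
    (hl1 : ∀ s, l1 s = a1 + b1 * s)
    (hQ1 : ∀ s, Q1 s = (2 * σ ^ 2 / β) *
      (s' * (l1 s) ^ 2 - 2 * s * (l1 s) * a2 + s * a2 ^ 2)) :
    max (Q1 s1) (Q1 s2) ≤ Δ ^ 2 * θ ^ 2 * s' := by
  have hs8 : (8:ℝ) < s' := lt_of_le_of_lt (le_max_left _ _) hs'
  have hsx : 1 + x0 ^ 2 / θ ^ 2 < s' := lt_of_le_of_lt (le_max_right _ _) hs'
  set r := Real.sqrt (s' + 1) with hrdef
  have hr0 : 0 ≤ r := Real.sqrt_nonneg _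
  have hr2 : r ^ 2 = s' + 1 := Real.sq_sqrt (by linarith)
  have hr3 : 3 < r := by nlinarith
  have hθ2 : (0:ℝ) < θ ^ 2 := by positivity
  have hx2' : x0 ^ 2 < θ ^ 2 * (s' - 1) := by
    have h1 : x0 ^ 2 / θ ^ 2 < s' - 1 := by linarith
    rw [div_lt_iff₀ hθ2] at h1; linarith
  have hxr : x0 < θ * r := by
    nlinarith [mul_pos hθ (show (0:ℝ) < r by linarith)]
  have hs'r : s' = r ^ 2 - 1 := by linarith
  have hΔr : Δ = (r - 1) ^ 2 := by rw [hΔ, hsstar, hs'r]; ring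
  have hQform : ∀ u : ℝ, Q1 (sstar + u * Δ) =
      4 * (1 - u) * (r - 1) ^ 2 * (θ * r - x0) * ((θ * r - x0) + θ * u * (r - 1) ^ 2)
        + (r ^ 2 - 1) * θ ^ 2 * u ^ 2 * ((r - 1) ^ 2) ^ 2 := by
    intro u
    rw [hQ1, hl1, ha1, hb1, ha2, hΔr, hsstar, hs'r]
    field_simp
    ring_nf
    rw [Real.sq_sqrt (by positivity : (0:ℝ) ≤ β * 2)]
    ring
  have hRHS : Δ ^ 2 * θ ^ 2 * s' = ((r - 1) ^ 2) ^ 2 * θ ^ 2 * (r ^ 2 - 1) := by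
    rw [hΔr, hs'r]
  rw [hRHS]
  have h1 : Q1 s1 ≤ ((r - 1) ^ 2) ^ 2 * θ ^ 2 * (r ^ 2 - 1) := by
    rw [hs1, hQform η]
    exact aux_poly θ x0 r η hθ hx0.le hxr hr3 hη.le (by linarith)
  have h2 : Q1 s2 ≤ ((r - 1) ^ 2) ^ 2 * θ ^ 2 * (r ^ 2 - 1) := by
    rw [hs2, hQform ν]
    exact aux_poly θ x0 r ν hθ hx0.le hxr hr3 (by linarith) hν.le
  exact max_le h1 h2
end

section
/- Let s' > 8 and 0 < η < ν < 1 be real numbers. Set s* = 2(√(s'+1) − 1), Δ = s' − s*, s1 = s* + ηΔ, s2 = s* + νΔ, and Q2(s) = s(s' − s). Then min(Q2(s1), Q2(s2)) ≥ 16(1 − ν²). -/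
/-- For `s' > 8` and `0 < η < ν < 1`, with `s* = 2(√(s'+1) − 1)`, `Δ = s' − s*`,
`s1 = s* + ηΔ`, `s2 = s* + νΔ`, and `Q2(s) = s(s' − s)`:
`min(Q2(s1), Q2(s2)) ≥ 16(1 − ν²)`. -/
theorem stmt_9 (s' η ν : ℝ) (hs' : 8 < s') (hη : 0 < η) (hην : η < ν) (hν : ν < 1)
    (sstar Δ s1 s2 : ℝ) (Q2 : ℝ → ℝ)
    (hsstar : sstar = 2 * (Real.sqrt (s' + 1) - 1))
    (hΔ : Δ = s' - sstar)
    (hs1 : s1 = sstar + η * Δ)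
    (hs2 : s2 = sstar + ν * Δ)
    (hQ2 : ∀ s, Q2 s = s * (s' - s)) :
    min (Q2 s1) (Q2 s2) ≥ 16 * (1 - ν ^ 2) := by
  set r := Real.sqrt (s' + 1) with hrdef
  have hr2 : r * r = s' + 1 := Real.mul_self_sqrt (by linarith)
  have hr3 : 3 < r := by
    have : (3 : ℝ) = Real.sqrt 9 := by
      rw [show (9:ℝ) = 3^2 by norm_num, Real.sqrt_sq (by norm_num)]
    rw [this]
    exact Real.sqrt_lt_sqrt (by norm_num) (by linarith)
  have hsstar4 : 4 < sstar := by rw [hsstar]; linarith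
  have hΔ4 : 4 < Δ := by
    rw [hΔ, hsstar]; nlinarith [sq_nonneg (r - 3)]
  rw [ge_iff_le, le_min_iff]
  have hss : s' = sstar + Δ := by linarith
  have hd0 : (0:ℝ) < Δ := by linarith
  constructor
  · rw [hQ2, hs1, hss]
    have h1 : 0 ≤ (sstar - 4) * ((1 - η) * Δ) :=
      mul_nonneg (by linarith) (mul_nonneg (by linarith) (by linarith))
    have h2 : 0 ≤ (1 - η) * ((Δ - 4) * (4 + η * (Δ + 4))) :=
      mul_nonneg (by linarith) (mul_nonneg (by linarith) (by nlinarith))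
    have h3 : 0 ≤ (ν - η) * (ν + η) := mul_nonneg (by linarith) (by linarith)
    nlinarith [h1, h2, h3]
  · rw [hQ2, hs2, hss]
    have h1 : 0 ≤ (sstar - 4) * ((1 - ν) * Δ) :=
      mul_nonneg (by linarith) (mul_nonneg (by linarith) (by linarith))
    have h2 : 0 ≤ (1 - ν) * ((Δ - 4) * (4 + ν * (Δ + 4))) :=
      mul_nonneg (by linarith) (mul_nonneg (by linarith) (by nlinarith))
    nlinarith [h1, h2]
end

section
/- Fix β > 0, σ > 0, x0 > θ > 0, 0 < η < ν < 1, and s' > max(8, 1 + x0²/θ²). Define a1 = (θ − x0)√(2β)/σ, b1 = (θ/2)√(2β)/σ, a2 = (√(2β)/σ)(θ√(s'+1) − x0), l1(s) = a1 + b1·s, s* = 2(√(s'+1) − 1), Δ = s' − s*, and let g2(s') = (|a1|/(2π)) ∫_{s*}^{s'} (l1(s) − a2)·(s(s'−s))^{−3/2}·exp(−l1(s)²/(2s) − (l1(s)−a2)²/(2(s'−s))) ds. Then g2(s') ≥ A·η·(ν − η)·exp(−2B/(1 − ν²)), where A = 64βθ(x0 − θ)/(9πσ²(s')³) and B = βθ²Δ²s'/(128σ²).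 -/
/-- The explicit integrand. -/
noncomputable def stmt12Fi (a1 b1 a2 s' : ℝ) (s : ℝ) : ℝ :=
  ((a1 + b1 * s) - a2) * (s * (s' - s)) ^ (-(3 : ℝ) / 2) *
    Real.exp (-(a1 + b1 * s) ^ 2 / (2 * s) - ((a1 + b1 * s) - a2) ^ 2 / (2 * (s' - s)))

lemma stmt12Fi_nonneg {a1 b1 a2 s' s : ℝ} (hd : 0 ≤ a1 + b1 * s - a2)
    (h2 : 0 ≤ s) (h3 : s ≤ s') : 0 ≤ stmt12Fi a1 b1 a2 s' s := by
  unfold stmt12Fi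
  have hb : (0:ℝ) ≤ s * (s' - s) := mul_nonneg h2 (by linarith)
  exact mul_nonneg (mul_nonneg hd (Real.rpow_nonneg hb _)) (Real.exp_pos _).le

lemma stmt12Fi_meas (a1 b1 a2 s' : ℝ) : Measurable (stmt12Fi a1 b1 a2 s') := by
  unfold stmt12Fi
  fun_prop

lemma stmt12Fi_contOn (a1 b1 a2 s' l r : ℝ) (hl : 0 < l) (hr : r < s') :
    ContinuousOn (stmt12Fi a1 b1 a2 s') (Set.Icc l r) := by
  unfold stmt12Fi
  apply ContinuousOn.mul
  apply ContinuousOn.mul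
  · fun_prop
  · apply ContinuousOn.rpow_const
    · fun_prop
    · intro x hx
      left
      have : 0 < x * (s' - x) := mul_pos (by linarith [hx.1]) (by linarith [hx.2])
      exact ne_of_gt this
  · apply Real.continuous_exp.comp_continuousOn
    apply ContinuousOn.sub
    · apply ContinuousOn.div
      · fun_prop
      · fun_prop
      · intro x hx
        have : 0 < x := by linarith [hx.1]
        positivity
    · apply ContinuousOn.div
      · fun_prop
      · fun_prop
      · intro x hx
        have : 0 < s' - x := by linarith [hx.2]
        positivity
lemma stmt12Fi_bound (a1 b1 a2 sstar s' ν Δ s : ℝ)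
    (hb1 : 0 < b1) (hss : 0 < sstar) (hΔpos : 0 < Δ) (hν : 0 < ν)
    (hsum : sstar + Δ = s')
    (hdiff : ∀ t : ℝ, (a1 + b1 * t) - a2 = b1 * (t - sstar))
    (h1 : sstar + ν * Δ < s) (h2 : s ≤ s') :
    stmt12Fi a1 b1 a2 s' s ≤
      b1 * Δ * sstar ^ (-(3:ℝ)/2) * (27 * Δ ^ ((3:ℝ)/2) / (b1 ^ 2 * ν ^ 2 * Δ ^ 2 / 2) ^ 3) := by
  set k : ℝ := b1 ^ 2 * ν ^ 2 * Δ ^ 2 / 2 with hk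
  have hkpos : 0 < k := by
    have := mul_pos (mul_pos (pow_pos hb1 2) (pow_pos hν 2)) (pow_pos hΔpos 2)
    rw [hk]; linarith
  have hMnn : 0 ≤ b1 * Δ * sstar ^ (-(3:ℝ)/2) * (27 * Δ ^ ((3:ℝ)/2) / k ^ 3) := by
    apply mul_nonneg (mul_nonneg (by positivity) (Real.rpow_nonneg hss.le _))
    have h1 := Real.rpow_nonneg hΔpos.le ((3:ℝ)/2)
    positivity
  have hνΔ : 0 < ν * Δ := mul_pos hν hΔpos
  have hsstar_le : sstar ≤ s := by linarith
  rcases eq_or_lt_of_le h2 with h2e | h2l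
  · -- s = s'
    subst h2e
    have hz : (s * (s - s)) ^ (-(3:ℝ)/2) = 0 := by
      rw [sub_self, mul_zero, Real.zero_rpow (by norm_num)]
    unfold stmt12Fi
    rw [hz, mul_zero, zero_mul]
    exact hMnn
  · -- s < s'
    have hspos : 0 < s := by linarith
    have hε : 0 < s' - s := by linarith
    have hεΔ : s' - s ≤ Δ := by linarith
    have hdν : ν * Δ ≤ s - sstar := by linarith
    have hdΔ : s - sstar ≤ Δ := by linarith
    have hrw : stmt12Fi a1 b1 a2 s' s =
        (b1 * (s - sstar)) * (s ^ (-(3:ℝ)/2) * (s' - s) ^ (-(3:ℝ)/2)) *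
        (Real.exp (-(a1 + b1 * s) ^ 2 / (2 * s)) *
          Real.exp (-(b1 * (s - sstar)) ^ 2 / (2 * (s' - s)))) := by
      unfold stmt12Fi
      rw [hdiff s, Real.mul_rpow hspos.le hε.le, ← Real.exp_add]
      ring_nf
    rw [hrw]
    have hkey : Real.exp (-(b1 * (s - sstar)) ^ 2 / (2 * (s' - s))) ≤
        27 * (s' - s) ^ 3 / k ^ 3 := by
      have hxe : k / (s' - s) ≤ (b1 * (s - sstar)) ^ 2 / (2 * (s' - s)) := by
        rw [div_le_div_iff₀ hε (by linarith)]
        have hsq : (b1 * (ν * Δ)) ^ 2 ≤ (b1 * (s - sstar)) ^ 2 := by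
          apply pow_le_pow_left₀ (by positivity)
          exact mul_le_mul_of_nonneg_left hdν hb1.le
        nlinarith [mul_le_mul_of_nonneg_right hsq hε.le]
      have step1 : Real.exp (-(b1 * (s - sstar)) ^ 2 / (2 * (s' - s))) ≤
          Real.exp (-(k / (s' - s))) := by
        apply Real.exp_le_exp.mpr
        rw [neg_div]
        linarith
      have hx0' : 0 ≤ k / (3 * (s' - s)) := by positivity
      have hxe1 : k / (3 * (s' - s)) + 1 ≤ Real.exp (k / (3 * (s' - s))) :=
        Real.add_one_le_exp _
      have hcube : (k / (3 * (s' - s))) ^ 3 ≤ Real.exp (k / (s' - s)) := by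
        have h3 : Real.exp (k / (s' - s)) =
            Real.exp (k / (3 * (s' - s))) * Real.exp (k / (3 * (s' - s))) *
              Real.exp (k / (3 * (s' - s))) := by
          rw [← Real.exp_add, ← Real.exp_add]
          congr 1
          field_simp
          ring
        rw [h3]
        have hle : k / (3 * (s' - s)) ≤ Real.exp (k / (3 * (s' - s))) := by linarith
        calc (k / (3 * (s' - s))) ^ 3 ≤ (Real.exp (k / (3 * (s' - s)))) ^ 3 :=
              pow_le_pow_left₀ hx0' hle 3
          _ = _ := by ring
      have step2 : Real.exp (-(k / (s' - s))) ≤ 27 * (s' - s) ^ 3 / k ^ 3 := by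
        rw [Real.exp_neg]
        have hinv := inv_anti₀ (by positivity : (0:ℝ) < (k / (3 * (s' - s))) ^ 3) hcube
        calc (Real.exp (k / (s' - s)))⁻¹ ≤ ((k / (3 * (s' - s))) ^ 3)⁻¹ := hinv
          _ = 27 * (s' - s) ^ 3 / k ^ 3 := by
            rw [div_pow, inv_div]
            congr 1
            ring
      exact le_trans step1 step2
    have hexp1 : Real.exp (-(a1 + b1 * s) ^ 2 / (2 * s)) ≤ 1 := by
      apply Real.exp_le_one_iff.mpr
      have h0 : 0 ≤ (a1 + b1 * s) ^ 2 / (2 * s) := by positivity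
      rw [neg_div]
      linarith
    have hsr : s ^ (-(3:ℝ)/2) ≤ sstar ^ (-(3:ℝ)/2) :=
      Real.rpow_le_rpow_of_nonpos hss hsstar_le (by norm_num)
    have hεnn : (0:ℝ) ≤ (s' - s) ^ (-(3:ℝ)/2) := Real.rpow_nonneg hε.le _
    have hbound : (b1 * (s - sstar)) * (s ^ (-(3:ℝ)/2) * (s' - s) ^ (-(3:ℝ)/2)) *
        (Real.exp (-(a1 + b1 * s) ^ 2 / (2 * s)) *
          Real.exp (-(b1 * (s - sstar)) ^ 2 / (2 * (s' - s)))) ≤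
        (b1 * Δ) * (sstar ^ (-(3:ℝ)/2) * (s' - s) ^ (-(3:ℝ)/2)) *
        (1 * (27 * (s' - s) ^ 3 / k ^ 3)) := by
      apply mul_le_mul
      · apply mul_le_mul
        · exact mul_le_mul_of_nonneg_left hdΔ hb1.le
        · exact mul_le_mul_of_nonneg_right hsr hεnn
        · exact mul_nonneg (Real.rpow_nonneg hspos.le _) hεnn
        · positivity
      · exact mul_le_mul hexp1 hkey (Real.exp_pos _).le (by norm_num)
      · positivity
      · exact mul_nonneg (by positivity)
          (mul_nonneg (Real.rpow_nonneg hss.le _) hεnn)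
    refine le_trans hbound ?_
    have hpow : (s' - s) ^ (-(3:ℝ)/2) * (s' - s) ^ 3 = (s' - s) ^ ((3:ℝ)/2) := by
      rw [← Real.rpow_natCast (s' - s) 3, ← Real.rpow_add hε]
      norm_num
    have hpow2 : (s' - s) ^ ((3:ℝ)/2) ≤ Δ ^ ((3:ℝ)/2) :=
      Real.rpow_le_rpow hε.le hεΔ (by norm_num)
    have heq : (b1 * Δ) * (sstar ^ (-(3:ℝ)/2) * (s' - s) ^ (-(3:ℝ)/2)) *
        (1 * (27 * (s' - s) ^ 3 / k ^ 3)) =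
        b1 * Δ * sstar ^ (-(3:ℝ)/2) *
          (27 * ((s' - s) ^ (-(3:ℝ)/2) * (s' - s) ^ 3) / k ^ 3) := by
      ring
    rw [heq, hpow]
    apply mul_le_mul_of_nonneg_left _
      (mul_nonneg (by positivity) (Real.rpow_nonneg hss.le _))
    apply (div_le_div_iff_of_pos_right (pow_pos hkpos 3)).mpr
    linarith [hpow2]

/-- Pointwise lower bound for the integrand on `[sstar + η Δ, sstar + ν Δ]`. -/
lemma stmt12Fi_lower (a1 b1 a2 sstar s' η ν Δ s : ℝ)
    (hb1 : 0 < b1) (hss : 0 < sstar) (hΔ4 : 4 < Δ) (hη : 0 < η) (hην : η < ν) (hν : ν < 1)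
    (hssΔ : sstar ≤ Δ) (hΔs' : 32 < Δ * s') (hs'8 : 8 < s')
    (hsum : sstar + Δ = s')
    (hdiff : ∀ t : ℝ, (a1 + b1 * t) - a2 = b1 * (t - sstar))
    (ha20 : 0 < a2) (ha2s : a2 ≤ b1 * sstar)
    (h1 : sstar + η * Δ ≤ s) (h2 : s ≤ sstar + ν * Δ) :
    b1 * (η * Δ) * (s' ^ 3)⁻¹ * Real.exp (-(b1 ^ 2 * Δ ^ 2 * s' / 32) / (1 - ν ^ 2)) ≤
      stmt12Fi a1 b1 a2 s' s := by
  have hΔpos : 0 < Δ := by linarith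
  have hν0 : 0 < ν := lt_trans hη hην
  have h1ν : 0 < 1 - ν := by linarith
  have h1ν2 : 0 < 1 - ν ^ 2 := by
    linarith only [mul_pos h1ν (show (0:ℝ) < 1 + ν by linarith)]
  have hs'pos : 0 < s' := by linarith
  have hΔpos' := hΔpos
  have hss_lt : sstar < s := by linarith only [h1, mul_pos hη hΔpos]
  have hspos : 0 < s := by linarith
  have hsq' : s < s' := by
    linarith only [h2, hsum, mul_lt_mul_of_pos_right hν hΔpos]
  have hεpos : 0 < s' - s := by linarith
  have hd1 : η * Δ ≤ s - sstar := by linarith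
  have hd2 : s - sstar ≤ ν * Δ := by linarith
  have hε1 : (1 - ν) * Δ ≤ s' - s := by linarith only [h2, hsum]
  -- factor 1
  have hf1 : b1 * (η * Δ) ≤ (a1 + b1 * s) - a2 := by
    rw [hdiff]
    exact mul_le_mul_of_nonneg_left hd1 hb1.le
  have hf1nn : 0 ≤ (a1 + b1 * s) - a2 := le_trans (by positivity) hf1
  -- factor 2
  have hb2 : s * (s' - s) ≤ s' ^ 2 := by
    linarith only [sq_nonneg (2 * s' - s), sq_nonneg s]
  have hf2 : (s' ^ 3)⁻¹ ≤ (s * (s' - s)) ^ (-(3:ℝ)/2) := by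
    have h := Real.rpow_le_rpow_of_nonpos (mul_pos hspos hεpos) hb2
      (by norm_num : -(3:ℝ)/2 ≤ 0)
    refine le_trans (le_of_eq ?_) h
    rw [← Real.rpow_natCast s' 3, ← Real.rpow_neg hs'pos.le,
      ← Real.rpow_natCast s' 2, ← Real.rpow_mul hs'pos.le]
    norm_num
  -- exponent bound
  have hl1le : a1 + b1 * s ≤ b1 * s := by linarith only [hdiff s, ha2s]
  have hl1pos : 0 < a1 + b1 * s := by
    linarith only [hdiff s, ha20,
      mul_nonneg hb1.le (show (0:ℝ) ≤ s - sstar by linarith only [hss_lt])]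
  have t1 : (a1 + b1 * s) ^ 2 / (2 * s) ≤ b1 ^ 2 * (sstar + ν * Δ) / 2 := by
    rw [div_le_iff₀ (by linarith : (0:ℝ) < 2 * s)]
    linarith only [mul_le_mul hl1le hl1le hl1pos.le (by positivity : (0:ℝ) ≤ b1 * s),
      mul_le_mul_of_nonneg_left h2 (by positivity : (0:ℝ) ≤ b1 ^ 2 * s)]
  have t2 : ((a1 + b1 * s) - a2) ^ 2 / (2 * (s' - s)) ≤
      b1 ^ 2 * ν ^ 2 * Δ ^ 2 / (2 * ((1 - ν) * Δ)) := by
    rw [hdiff]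
    apply div_le_div₀ (by positivity) ?_ (by positivity) (by linarith)
    calc (b1 * (s - sstar)) ^ 2 ≤ (b1 * (ν * Δ)) ^ 2 := by
          apply pow_le_pow_left₀
            (mul_nonneg hb1.le (show (0:ℝ) ≤ s - sstar by linarith only [hss_lt]))
          exact mul_le_mul_of_nonneg_left hd2 hb1.le
      _ = b1 ^ 2 * ν ^ 2 * Δ ^ 2 := by ring
  have t3 : b1 ^ 2 * (sstar + ν * Δ) / 2 + b1 ^ 2 * ν ^ 2 * Δ ^ 2 / (2 * ((1 - ν) * Δ)) ≤
      (b1 ^ 2 * Δ ^ 2 * s' / 32) / (1 - ν ^ 2) := by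
    have e1 : (sstar + ν * Δ) * (1 - ν) + ν ^ 2 * Δ ≤ Δ := by
      linarith only [mul_nonneg (sub_nonneg.2 hssΔ) h1ν.le]
    have key : 16 * ((sstar + ν * Δ) * (1 - ν ^ 2)) + 16 * (ν ^ 2 * Δ * (1 + ν)) ≤
        Δ ^ 2 * s' := by
      linarith only [mul_le_mul_of_nonneg_left e1 (show (0:ℝ) ≤ 16 * (1 + ν) by linarith only [hν0]),
        mul_lt_mul_of_pos_left hΔs' hΔpos,
        mul_lt_mul_of_pos_right hν hΔpos]
    rw [div_add_div _ _ (two_ne_zero) (by positivity : (2:ℝ) * ((1 - ν) * Δ) ≠ 0),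
      div_le_div_iff₀ (by positivity) h1ν2]
    have key2 := mul_le_mul_of_nonneg_left key
      (by positivity : (0:ℝ) ≤ b1 ^ 2 * Δ * (1 - ν) / 8)
    linarith only [key2]
  have hexp : -(b1 ^ 2 * Δ ^ 2 * s' / 32) / (1 - ν ^ 2) ≤
      -(a1 + b1 * s) ^ 2 / (2 * s) - ((a1 + b1 * s) - a2) ^ 2 / (2 * (s' - s)) := by
    have hneg : -(b1 ^ 2 * Δ ^ 2 * s' / 32) / (1 - ν ^ 2) =
        -((b1 ^ 2 * Δ ^ 2 * s' / 32) / (1 - ν ^ 2)) := by ring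
    rw [hneg, neg_div]
    linarith [t1, t2, t3]
  -- combine
  unfold stmt12Fi
  have hEe : Real.exp (-(b1 ^ 2 * Δ ^ 2 * s' / 32) / (1 - ν ^ 2)) ≤
      Real.exp (-(a1 + b1 * s) ^ 2 / (2 * s) - ((a1 + b1 * s) - a2) ^ 2 / (2 * (s' - s))) :=
    Real.exp_le_exp.mpr hexp
  apply mul_le_mul _ hEe (Real.exp_pos _).le
    (mul_nonneg hf1nn (Real.rpow_nonneg (by positivity) _))
  apply mul_le_mul hf1 hf2 (by positivity) hf1nn

open intervalIntegral in
/-- Lower bound for the convolution integral `g2(s')`: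
`g2(s') ≥ A·η·(ν − η)·exp(−2B/(1 − ν²))`. -/
theorem stmt_12 (β σ x0 θ η ν s' : ℝ) (hβ : 0 < β) (hσ : 0 < σ) (hθ : 0 < θ)
    (hx0 : θ < x0) (hη : 0 < η) (hην : η < ν) (hν : ν < 1)
    (hs' : max 8 (1 + x0 ^ 2 / θ ^ 2) < s')
    (a1 b1 a2 sstar Δ : ℝ) (l1 : ℝ → ℝ) (g2 A B : ℝ)
    (ha1 : a1 = (θ - x0) * Real.sqrt (2 * β) / σ)
    (hb1 : b1 = (θ / 2) * Real.sqrt (2 * β) / σ)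
    (ha2 : a2 = (Real.sqrt (2 * β) / σ) * (θ * Real.sqrt (s' + 1) - x0))
    (hsstar : sstar = 2 * (Real.sqrt (s' + 1) - 1))
    (hΔ : Δ = s' - sstar)
    (hl1 : ∀ s, l1 s = a1 + b1 * s)
    (hg2 : g2 = (|a1| / (2 * Real.pi)) *
      ∫ s in sstar..s', (l1 s - a2) * (s * (s' - s)) ^ (-(3 : ℝ) / 2) *
        Real.exp (-(l1 s) ^ 2 / (2 * s) - (l1 s - a2) ^ 2 / (2 * (s' - s))))
    (hA : A = 64 * β * θ * (x0 - θ) / (9 * Real.pi * σ ^ 2 * s' ^ 3))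
    (hB : B = β * θ ^ 2 * Δ ^ 2 * s' / (128 * σ ^ 2)) :
    g2 ≥ A * η * (ν - η) * Real.exp (-2 * B / (1 - ν ^ 2)) := by
  have hπ : (0:ℝ) < Real.pi := Real.pi_pos
  have hs'8 : (8:ℝ) < s' := lt_of_le_of_lt (le_max_left _ _) hs'
  have hs'x : 1 + x0 ^ 2 / θ ^ 2 < s' := lt_of_le_of_lt (le_max_right _ _) hs'
  have hs'pos : (0:ℝ) < s' := by linarith only [hs'8]
  have hν0 : (0:ℝ) < ν := lt_trans hη hην
  have h1ν2 : (0:ℝ) < 1 - ν ^ 2 := by nlinarith only [hν, hν0]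
  have hsqβ : 0 < Real.sqrt (2 * β) := Real.sqrt_pos.mpr (by linarith only [hβ])
  obtain ⟨c, hc⟩ : ∃ c : ℝ, c = Real.sqrt (2 * β) / σ := ⟨_, rfl⟩
  have hc0 : 0 < c := hc ▸ div_pos hsqβ hσ
  have hc2 : c ^ 2 = 2 * β / σ ^ 2 := by
    rw [hc, div_pow, Real.sq_sqrt (by linarith only [hβ] : (0:ℝ) ≤ 2 * β)]
  obtain ⟨u, hu⟩ : ∃ u : ℝ, u = Real.sqrt (s' + 1) := ⟨_, rfl⟩
  have hu2 : u ^ 2 = s' + 1 := by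
    rw [hu]; exact Real.sq_sqrt (by linarith only [hs'pos])
  have hunn : 0 ≤ u := hu ▸ Real.sqrt_nonneg _
  have hu3 : 3 < u := by nlinarith only [hu2, hunn, hs'8]
  have hsu : sstar = 2 * (u - 1) := by rw [hu]; exact hsstar
  have hb1c : b1 = c * θ / 2 := by rw [hb1, hc]; ring
  have hb10 : 0 < b1 := by rw [hb1c]; positivity
  have hb1sq : b1 ^ 2 = β * θ ^ 2 / (2 * σ ^ 2) := by
    rw [hb1c, div_pow, mul_pow, hc2]; ring
  have ha1abs : |a1| = c * (x0 - θ) := by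
    rw [ha1, show (θ - x0) * Real.sqrt (2 * β) / σ = -(c * (x0 - θ)) by rw [hc]; ring,
      abs_neg, abs_of_pos (mul_pos hc0 (by linarith only [hx0]))]
  have hΔu : Δ = (u - 1) ^ 2 := by rw [hΔ, hsu]; linear_combination -hu2
  have hΔ4 : 4 < Δ := by rw [hΔu]; nlinarith only [hu3]
  have hΔpos : 0 < Δ := by linarith only [hΔ4]
  have hsspos : 0 < sstar := by rw [hsu]; linarith only [hu3]
  have hssΔ : sstar ≤ Δ := by rw [hsu, hΔu]; nlinarith only [hu3]
  have hsum : sstar + Δ = s' := by rw [hΔ]; ring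
  have hΔs' : 32 < Δ * s' := by nlinarith only [hΔ4, hs'8]
  have ha2c : a2 = c * (θ * u - x0) := by rw [ha2, hc, hu]
  have hx2 : x0 ^ 2 < (s' - 1) * θ ^ 2 := by
    have h1 : x0 ^ 2 / θ ^ 2 < s' - 1 := by linarith only [hs'x]
    have h2 := (div_lt_iff₀ (by positivity : (0:ℝ) < θ ^ 2)).mp h1
    linarith only [h2]
  have hupos : (0:ℝ) < u := by linarith only [hu3]
  have hθu2 : (θ * u) ^ 2 = θ ^ 2 * (s' + 1) := by rw [mul_pow, hu2]
  have hx0pos : (0:ℝ) < x0 := lt_trans hθ hx0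
  have hx0u : x0 < θ * u := by
    nlinarith only [hx2, hθu2, hx0pos, mul_pos hθ hupos, mul_pos hθ hθ]
  have ha20 : 0 < a2 := by rw [ha2c]; exact mul_pos hc0 (by linarith only [hx0u])
  have ha2s : a2 ≤ b1 * sstar := by
    rw [ha2c, hb1c, hsu]
    linarith only [mul_le_mul_of_nonneg_left hx0.le hc0.le]
  have hdiff : ∀ t : ℝ, (a1 + b1 * t) - a2 = b1 * (t - sstar) := by
    intro t; rw [ha1, hb1, ha2, hsstar]; ring
  have hab1 : |a1| * b1 = β * θ * (x0 - θ) / σ ^ 2 := by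
    rw [ha1abs, hb1c, show c * (x0 - θ) * (c * θ / 2) = c ^ 2 * (θ * (x0 - θ)) / 2 from by
      ring, hc2]
    ring
  -- reduce the goal to the explicit integrand
  rw [ge_iff_le, hg2,
    show (∫ s in sstar..s', (l1 s - a2) * (s * (s' - s)) ^ (-(3 : ℝ) / 2) *
        Real.exp (-(l1 s) ^ 2 / (2 * s) - (l1 s - a2) ^ 2 / (2 * (s' - s)))) =
      ∫ s in sstar..s', stmt12Fi a1 b1 a2 s' s from
    intervalIntegral.integral_congr fun s _ => by unfold stmt12Fi; rw [hl1 s]]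
  have hEeq : Real.exp (-2 * B / (1 - ν ^ 2)) =
      Real.exp (-(b1 ^ 2 * Δ ^ 2 * s' / 32) / (1 - ν ^ 2)) := by
    congr 1
    rw [hB, hb1sq]
    ring
  rw [hEeq]
  set E2 : ℝ := Real.exp (-(b1 ^ 2 * Δ ^ 2 * s' / 32) / (1 - ν ^ 2)) with hE2def
  have hE2 : 0 < E2 := Real.exp_pos _
  -- positions
  have hqs' : sstar + ν * Δ < s' := by
    linarith only [hsum, mul_lt_mul_of_pos_right hν hΔpos]
  have hsp : sstar < sstar + η * Δ := by linarith only [mul_pos hη hΔpos]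
  have hpq : sstar + η * Δ ≤ sstar + ν * Δ := by
    linarith only [mul_le_mul_of_nonneg_right hην.le hΔpos.le]
  have hppos : 0 < sstar + η * Δ := by linarith only [hsp, hsspos]
  have hps' : sstar + η * Δ < s' := lt_of_le_of_lt hpq hqs'
  -- integrability
  have hIntA : IntervalIntegrable (stmt12Fi a1 b1 a2 s') MeasureTheory.volume sstar
      (sstar + ν * Δ) := by
    apply ContinuousOn.intervalIntegrable
    rw [Set.uIcc_of_le (le_of_lt (lt_of_lt_of_le hsp hpq))]
    exact stmt12Fi_contOn a1 b1 a2 s' _ _ hsspos hqs'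
  have hIntP : IntervalIntegrable (stmt12Fi a1 b1 a2 s') MeasureTheory.volume sstar
      (sstar + η * Δ) := by
    apply ContinuousOn.intervalIntegrable
    rw [Set.uIcc_of_le hsp.le]
    exact stmt12Fi_contOn a1 b1 a2 s' _ _ hsspos hps'
  have hIntPQ : IntervalIntegrable (stmt12Fi a1 b1 a2 s') MeasureTheory.volume
      (sstar + η * Δ) (sstar + ν * Δ) := by
    apply ContinuousOn.intervalIntegrable
    rw [Set.uIcc_of_le hpq]
    exact stmt12Fi_contOn a1 b1 a2 s' _ _ hppos hqs'
  have hIntB : IntervalIntegrable (stmt12Fi a1 b1 a2 s') MeasureTheory.volume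
      (sstar + ν * Δ) s' := by
    refine IntervalIntegrable.mono_fun'
      (g := fun _ => b1 * Δ * sstar ^ (-(3:ℝ)/2) *
        (27 * Δ ^ ((3:ℝ)/2) / (b1 ^ 2 * ν ^ 2 * Δ ^ 2 / 2) ^ 3))
      intervalIntegrable_const
      ((stmt12Fi_meas a1 b1 a2 s').aestronglyMeasurable.restrict) ?_
    filter_upwards [MeasureTheory.ae_restrict_mem measurableSet_uIoc] with s hs
    rw [Set.uIoc_of_le hqs'.le] at hs
    have hs1 : sstar + ν * Δ < s := hs.1
    have hs2 : s ≤ s' := hs.2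
    have hνΔpos : 0 < ν * Δ := mul_pos hν0 hΔpos
    have hnn : 0 ≤ stmt12Fi a1 b1 a2 s' s := by
      refine stmt12Fi_nonneg ?_ ?_ hs2
      · rw [hdiff]
        exact mul_nonneg hb10.le (by linarith only [hs1, hνΔpos])
      · linarith only [hs1, hνΔpos, hsspos]
    rw [Real.norm_eq_abs, abs_of_nonneg hnn]
    exact stmt12Fi_bound a1 b1 a2 sstar s' ν Δ s hb10 hsspos hΔpos hν0 hsum hdiff hs1 hs2
  -- split the integral and bound from below
  have hsplit2 := intervalIntegral.integral_add_adjacent_intervals hIntA hIntB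
  have hsplit1 := intervalIntegral.integral_add_adjacent_intervals hIntP hIntPQ
  have n1 : 0 ≤ ∫ s in sstar..(sstar + η * Δ), stmt12Fi a1 b1 a2 s' s := by
    refine intervalIntegral.integral_nonneg hsp.le fun x hx => ?_
    refine stmt12Fi_nonneg ?_ ?_ ?_
    · rw [hdiff]
      exact mul_nonneg hb10.le (by linarith only [hx.1])
    · linarith only [hx.1, hsspos]
    · linarith only [hx.2, hps']
  have n2 : 0 ≤ ∫ s in (sstar + ν * Δ)..s', stmt12Fi a1 b1 a2 s' s := by
    refine intervalIntegral.integral_nonneg hqs'.le fun x hx => ?_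
    have hνΔpos : 0 < ν * Δ := mul_pos hν0 hΔpos
    refine stmt12Fi_nonneg ?_ ?_ hx.2
    · rw [hdiff]
      exact mul_nonneg hb10.le (by linarith only [hx.1, hνΔpos])
    · linarith only [hx.1, hνΔpos, hsspos]
  have hlowint : ((sstar + ν * Δ) - (sstar + η * Δ)) * (b1 * (η * Δ) * (s' ^ 3)⁻¹ * E2) ≤
      ∫ s in (sstar + η * Δ)..(sstar + ν * Δ), stmt12Fi a1 b1 a2 s' s := by
    have h := intervalIntegral.integral_mono_on hpq intervalIntegrable_const hIntPQ
      (fun x hx => stmt12Fi_lower a1 b1 a2 sstar s' η ν Δ x hb10 hsspos hΔ4 hη hην hν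
        hssΔ hΔs' hs'8 hsum hdiff ha20 ha2s hx.1 hx.2)
    rwa [intervalIntegral.integral_const, smul_eq_mul] at h
  have hItot : ((sstar + ν * Δ) - (sstar + η * Δ)) * (b1 * (η * Δ) * (s' ^ 3)⁻¹ * E2) ≤
      ∫ s in sstar..s', stmt12Fi a1 b1 a2 s' s := by
    rw [← hsplit2, ← hsplit1]
    linarith only [hlowint, n1, n2]
  -- final comparison
  calc A * η * (ν - η) * E2
      ≤ |a1| / (2 * Real.pi) *
        (((sstar + ν * Δ) - (sstar + η * Δ)) * (b1 * (η * Δ) * (s' ^ 3)⁻¹ * E2)) := by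
        rw [hA, ← sub_nonneg,
          show |a1| / (2 * Real.pi) *
            (((sstar + ν * Δ) - (sstar + η * Δ)) * (b1 * (η * Δ) * (s' ^ 3)⁻¹ * E2)) -
            64 * β * θ * (x0 - θ) / (9 * Real.pi * σ ^ 2 * s' ^ 3) * η * (ν - η) * E2 =
            ((|a1| * b1) * (η * (ν - η) * Δ ^ 2 * (s' ^ 3)⁻¹ * E2) / (2 * Real.pi)) -
            64 * β * θ * (x0 - θ) / (9 * Real.pi * σ ^ 2 * s' ^ 3) * η * (ν - η) * E2 from by
              ring, hab1,
          show β * θ * (x0 - θ) / σ ^ 2 * (η * (ν - η) * Δ ^ 2 * (s' ^ 3)⁻¹ * E2) /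
              (2 * Real.pi) -
            64 * β * θ * (x0 - θ) / (9 * Real.pi * σ ^ 2 * s' ^ 3) * η * (ν - η) * E2 =
            β * θ * (x0 - θ) * η * (ν - η) * E2 * (9 * Δ ^ 2 - 128) /
              (18 * Real.pi * σ ^ 2 * s' ^ 3) from by ring]
        have h9 : (0:ℝ) ≤ 9 * Δ ^ 2 - 128 := by nlinarith only [hΔ4]
        have hnum : 0 ≤ β * θ * (x0 - θ) * η * (ν - η) * E2 * (9 * Δ ^ 2 - 128) :=
          mul_nonneg (mul_nonneg (mul_nonneg (mul_nonneg (mul_nonneg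
            (mul_nonneg hβ.le hθ.le) (by linarith only [hx0])) hη.le)
            (by linarith only [hην])) hE2.le) h9
        have hden : (0:ℝ) < 18 * Real.pi * σ ^ 2 * s' ^ 3 :=
          mul_pos (mul_pos (mul_pos (by norm_num) hπ) (pow_pos hσ 2)) (pow_pos hs'pos 3)
        exact div_nonneg hnum hden.le
    _ ≤ |a1| / (2 * Real.pi) * ∫ s in sstar..s', stmt12Fi a1 b1 a2 s' s :=
        mul_le_mul_of_nonneg_left hItot (by positivity)
end

section
/- For every real B > 1, setting C = √(B² + 2B) − B, one has ((1 − C)/4)·exp(−2B/C) > exp(−4B)/(16B). -/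
/-- For `B > 1`, with `C = √(B² + 2B) − B`:
`((1 − C)/4)·exp(−2B/C) > exp(−4B)/(16B)`. -/
theorem stmt_17 (B : ℝ) (hB : 1 < B) :
    ((1 - (Real.sqrt (B ^ 2 + 2 * B) - B)) / 4) *
      Real.exp (-2 * B / (Real.sqrt (B ^ 2 + 2 * B) - B)) >
    Real.exp (-4 * B) / (16 * B) := by
  have hB0 : (0:ℝ) < B := by linarith
  set s := Real.sqrt (B ^ 2 + 2 * B) with hs
  have hsnn : 0 ≤ s := Real.sqrt_nonneg _
  -- lower bound: s > B + 1/2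
  have hlo : B + 1/2 < s := by
    rw [hs, show B + 1/2 = Real.sqrt ((B + 1/2)^2) from (Real.sqrt_sq (by linarith)).symm]
    apply Real.sqrt_lt_sqrt (by positivity)
    nlinarith
  -- upper bound: s < B + 1 - 1/(4B)
  have hhi : s < B + 1 - 1/(4*B) := by
    rw [hs]
    have hy : 0 < B + 1 - 1/(4*B) := by
      have : 1/(4*B) < 1 := by
        rw [div_lt_one (by linarith)]; linarith
      linarith
    rw [show B + 1 - 1/(4*B) = Real.sqrt ((B + 1 - 1/(4*B))^2) from (Real.sqrt_sq hy.le).symm]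
    apply Real.sqrt_lt_sqrt (by positivity)
    have h1 : (0:ℝ) < 8*B^2 - 8*B + 1 := by nlinarith
    have hBne : (4*B) ≠ 0 := by positivity
    field_simp
    nlinarith [sq_nonneg B, sq_nonneg (B-1)]
  have hC : 1/2 < s - B := by linarith
  have hC1 : 1/(4*B) < 1 - (s - B) := by linarith
  -- exponent comparison
  have hexp : Real.exp (-4 * B) < Real.exp (-2 * B / (s - B)) := by
    apply Real.exp_lt_exp.mpr
    have h2 : 2 * B / (s - B) < 4 * B := by
      rw [div_lt_iff₀ (by linarith)]; nlinarith
    have h3 : -2*B/(s-B) = -(2*B/(s-B)) := by ring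
    linarith
  have hpos : 0 < Real.exp (-4 * B) := Real.exp_pos _
  have hCpos : 0 < (1 - (s - B)) / 4 := by
    have : 0 < 1 - (s - B) := lt_trans (by positivity) hC1
    linarith
  calc Real.exp (-4 * B) / (16 * B) = (1/(4*B)/4) * Real.exp (-4 * B) := by ring
    _ < ((1 - (s - B)) / 4) * Real.exp (-4 * B) := by
        apply mul_lt_mul_of_pos_right _ hpos
        linarith
    _ < ((1 - (s - B)) / 4) * Real.exp (-2 * B / (s - B)) :=
        mul_lt_mul_of_pos_left hexp hCpos
end

section
/- Fix β > 0, σ > 0, x0 > θ > 0, and let s' > max(8, 1 + x0²/θ², 8σ²/(βθ²)). Define a1 = (θ − x0)√(2β)/σ, b1 = (θ/2)√(2β)/σ, a2 = (√(2β)/σ)(θ√(s'+1) − x0), l1(s) = a1 + b1·s, s* = 2(√(s'+1) − 1), and g2(s') = (|a1|/(2π)) ∫_{s*}^{s'} (l1(s) − a2)·(s(s'−s))^{−3/2}·exp(−l1(s)²/(2s) − (l1(s)−a2)²/(2(s'−s))) ds. Then g2(s') > (512/(9π))·(x0/θ − 1)·(s')^{−6}·exp(−(β/32)(θ/σ)²·(s')³).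 -/
set_option maxHeartbeats 1000000

open MeasureTheory

lemma exp_sq_bound' {x : ℝ} (hx : 0 ≤ x) : x^2/4 ≤ Real.exp x := by
  have h := Real.add_one_le_exp (x/2)
  have h2 : Real.exp x = Real.exp (x/2) * Real.exp (x/2) := by
    rw [← Real.exp_add]; ring_nf
  nlinarith [Real.exp_pos (x/2)]

lemma exp_neg_le' {B : ℝ} (hB : 0 < B) : Real.exp (-B) ≤ 4/B^2 := by
  have h := exp_sq_bound' hB.le
  rw [Real.exp_neg]
  calc (Real.exp B)⁻¹ ≤ (B^2/4)⁻¹ := inv_anti₀ (by positivity) h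
    _ = 4/B^2 := by field_simp

lemma rpow_anti32' {x y : ℝ} (hx : 0 < x) (hxy : x ≤ y) :
    y ^ (-(3:ℝ)/2) ≤ x ^ (-(3:ℝ)/2) :=
  Real.rpow_le_rpow_of_nonpos hx hxy (by norm_num)

lemma rpow_val32' {s : ℝ} (hs : 0 < s) : (s^2/4 : ℝ) ^ (-(3:ℝ)/2) = 8/s^3 := by
  have h1 : s^2/4 = (s/2)^2 := by ring
  rw [h1, ← Real.rpow_natCast (s/2) 2, ← Real.rpow_mul (by positivity)]
  norm_num
  rw [div_pow, inv_div]; norm_num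

lemma integrand_nonneg (a1 b1 a2 sstar s' : ℝ) (hb10 : 0 ≤ b1)
    (hsstar0 : 0 ≤ sstar) (hkey : ∀ s : ℝ, a1 + b1 * s - a2 = b1 * (s - sstar)) :
    ∀ s, sstar ≤ s → s ≤ s' →
      0 ≤ (a1 + b1*s - a2) * (s*(s'-s)) ^ (-(3:ℝ)/2) *
        Real.exp (-(a1+b1*s)^2/(2*s) - (a1+b1*s-a2)^2/(2*(s'-s))) := by
  intro s h1 h2
  have hbase : 0 ≤ s*(s'-s) := mul_nonneg (by linarith) (by linarith)
  have hX := Real.rpow_nonneg hbase (-(3:ℝ)/2)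
  have h3 : 0 ≤ a1 + b1*s - a2 := by
    rw [hkey]; exact mul_nonneg hb10 (by linarith)
  exact mul_nonneg (mul_nonneg h3 hX) (Real.exp_nonneg _)

lemma integrand_integrable (a1 b1 a2 sstar s' : ℝ) (hb10 : 0 < b1)
    (h4 : 4 ≤ sstar) (hss : sstar < s')
    (hkey : ∀ s : ℝ, a1 + b1 * s - a2 = b1 * (s - sstar)) :
    IntervalIntegrable (fun s => (a1 + b1*s - a2) * (s*(s'-s)) ^ (-(3:ℝ)/2) *
      Real.exp (-(a1+b1*s)^2/(2*s) - (a1+b1*s-a2)^2/(2*(s'-s)))) volume sstar s' := by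
  set dd : ℝ := (s' - sstar)/2 with hdd
  have hdd0 : 0 < dd := by rw [hdd]; linarith
  set m : ℝ := sstar + dd with hm
  set aa : ℝ := b1^2*dd^2/2 with haa
  have haa0 : 0 < aa := by rw [haa]; positivity
  set C1 : ℝ := b1*(s'-sstar) * (sstar*dd) ^ (-(3:ℝ)/2) with hC1
  set C2 : ℝ := b1*(s'-sstar) * sstar ^ (-(3:ℝ)/2) * (4/aa^2) * Real.sqrt (s'-sstar) with hC2
  have hsrnn : (0:ℝ) ≤ sstar ^ (-(3:ℝ)/2) := Real.rpow_nonneg (by linarith) _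
  have hC1nn : 0 ≤ C1 :=
    mul_nonneg (mul_nonneg hb10.le (by linarith))
      (Real.rpow_nonneg (mul_nonneg (by linarith) hdd0.le) _)
  have hC2nn : 0 ≤ C2 := by
    apply mul_nonneg (mul_nonneg (mul_nonneg (mul_nonneg hb10.le (by linarith)) hsrnn)
      (by positivity)) (Real.sqrt_nonneg _)
  rw [intervalIntegrable_iff_integrableOn_Ioc_of_le hss.le]
  apply MeasureTheory.Integrable.mono' (g := fun _ => C1 + C2)
    ((integrableOn_const_iff (C := C1 + C2)).mpr (Or.inr measure_Ioc_lt_top))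
    (Measurable.aestronglyMeasurable (by fun_prop)).restrict
  rw [MeasureTheory.ae_restrict_iff' measurableSet_Ioc]
  apply MeasureTheory.ae_of_all
  intro s hs
  obtain ⟨hs1, hs2⟩ := hs
  rw [Real.norm_eq_abs,
    abs_of_nonneg (integrand_nonneg a1 b1 a2 sstar s' hb10.le (by linarith) hkey s hs1.le hs2)]
  have hT1 : a1 + b1*s - a2 ≤ b1*(s'-sstar) := by
    rw [hkey]; exact mul_le_mul_of_nonneg_left (by linarith) hb10.le
  have hT1nn : 0 ≤ a1 + b1*s - a2 := by
    rw [hkey]; exact mul_nonneg hb10.le (by linarith)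
  have hAnn : 0 ≤ (a1+b1*s)^2/(2*s) := div_nonneg (sq_nonneg _) (by linarith)
  have hBnn : 0 ≤ (a1+b1*s-a2)^2/(2*(s'-s)) := div_nonneg (sq_nonneg _) (by linarith)
  have hnegA : -(a1+b1*s)^2/(2*s) = -((a1+b1*s)^2/(2*s)) := by ring
  by_cases hsm : s ≤ m
  · have h1 : dd ≤ s' - s := by rw [hm] at hsm; rw [hdd]; linarith [hsm]
    have hbase : sstar*dd ≤ s*(s'-s) :=
      mul_le_mul hs1.le h1 hdd0.le (by linarith)
    have hX : (s*(s'-s)) ^ (-(3:ℝ)/2) ≤ (sstar*dd) ^ (-(3:ℝ)/2) :=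
      rpow_anti32' (mul_pos (by linarith) hdd0) hbase
    have hE1 : Real.exp (-(a1+b1*s)^2/(2*s) - (a1+b1*s-a2)^2/(2*(s'-s))) ≤ 1 :=
      Real.exp_le_one_iff.mpr (by rw [hnegA]; linarith)
    calc (a1 + b1*s - a2) * (s*(s'-s)) ^ (-(3:ℝ)/2) *
        Real.exp (-(a1+b1*s)^2/(2*s) - (a1+b1*s-a2)^2/(2*(s'-s)))
        ≤ (b1*(s'-sstar)) * ((sstar*dd) ^ (-(3:ℝ)/2)) * 1 := by
          apply mul_le_mul _ hE1 (Real.exp_nonneg _)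
            (mul_nonneg (mul_nonneg hb10.le (by linarith))
              (Real.rpow_nonneg (mul_nonneg (by linarith) hdd0.le) _))
          exact mul_le_mul hT1 hX (Real.rpow_nonneg (mul_nonneg (by linarith) (by linarith)) _)
            (mul_nonneg hb10.le (by linarith))
      _ = C1 := by rw [hC1]; ring
      _ ≤ C1 + C2 := by linarith
  · push_neg at hsm
    rcases eq_or_lt_of_le hs2 with heq | hlt
    · rw [← heq]
      rw [show s*(s-s) = 0 by ring, Real.zero_rpow (by norm_num)]
      rw [mul_zero, zero_mul]
      linarith
    · have hu0 : 0 < s' - s := by linarith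
      have hsd : dd ≤ s - sstar := by rw [hm] at hsm; linarith [hsm]
      have hb2 : sstar * (s'-s) ≤ s * (s'-s) := mul_le_mul_of_nonneg_right (by linarith) hu0.le
      have hX : (s*(s'-s)) ^ (-(3:ℝ)/2) ≤ (sstar*(s'-s)) ^ (-(3:ℝ)/2) :=
        rpow_anti32' (mul_pos (by linarith) hu0) hb2
      have hXsplit : (sstar*(s'-s)) ^ (-(3:ℝ)/2) = sstar ^ (-(3:ℝ)/2) * (s'-s) ^ (-(3:ℝ)/2) :=
        Real.mul_rpow (by linarith) hu0.le
      have hBlb : aa/(s'-s) ≤ (a1+b1*s-a2)^2/(2*(s'-s)) := by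
        rw [hkey, mul_pow, haa, div_le_div_iff₀ hu0 (by linarith)]
        nlinarith [mul_nonneg (mul_nonneg (sq_nonneg b1) hu0.le)
          (show (0:ℝ) ≤ (s-sstar)^2 - dd^2 by nlinarith [hsd, hdd0])]
      have hExp : Real.exp (-(a1+b1*s)^2/(2*s) - (a1+b1*s-a2)^2/(2*(s'-s)))
          ≤ 4*(s'-s)^2/aa^2 := by
        have e1 : Real.exp (-(a1+b1*s)^2/(2*s) - (a1+b1*s-a2)^2/(2*(s'-s)))
            ≤ Real.exp (-(aa/(s'-s))) := Real.exp_le_exp.mpr (by rw [hnegA]; linarith)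
        have e2 : Real.exp (-(aa/(s'-s))) ≤ 4/(aa/(s'-s))^2 :=
          exp_neg_le' (by positivity)
        have e3 : 4/(aa/(s'-s))^2 = 4*(s'-s)^2/aa^2 := by
          field_simp
        linarith
      have hupow : (s'-s) ^ (-(3:ℝ)/2) * (s'-s)^2 = Real.sqrt (s'-s) := by
        rw [← Real.rpow_natCast (s'-s) 2, ← Real.rpow_add hu0, Real.sqrt_eq_rpow]
        norm_num
      have hcomb : (a1 + b1*s - a2) * (s*(s'-s)) ^ (-(3:ℝ)/2) *
          Real.exp (-(a1+b1*s)^2/(2*s) - (a1+b1*s-a2)^2/(2*(s'-s)))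
          ≤ b1*(s'-sstar) * (sstar ^ (-(3:ℝ)/2) * (s'-s) ^ (-(3:ℝ)/2)) * (4*(s'-s)^2/aa^2) := by
        apply mul_le_mul _ hExp (Real.exp_nonneg _)
          (mul_nonneg (mul_nonneg hb10.le (by linarith))
            (by rw [← hXsplit]; exact Real.rpow_nonneg (mul_nonneg (by linarith) hu0.le) _))
        exact mul_le_mul hT1 (hX.trans_eq hXsplit)
          (Real.rpow_nonneg (mul_nonneg (by linarith) (by linarith)) _)
          (mul_nonneg hb10.le (by linarith))
      calc (a1 + b1*s - a2) * (s*(s'-s)) ^ (-(3:ℝ)/2) *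
          Real.exp (-(a1+b1*s)^2/(2*s) - (a1+b1*s-a2)^2/(2*(s'-s)))
          ≤ b1*(s'-sstar) * (sstar ^ (-(3:ℝ)/2) * (s'-s) ^ (-(3:ℝ)/2)) * (4*(s'-s)^2/aa^2) :=
            hcomb
        _ = b1*(s'-sstar) * sstar ^ (-(3:ℝ)/2) * (4/aa^2) * ((s'-s) ^ (-(3:ℝ)/2) * (s'-s)^2) := by
            ring
        _ = b1*(s'-sstar) * sstar ^ (-(3:ℝ)/2) * (4/aa^2) * Real.sqrt (s'-s) := by rw [hupow]
        _ ≤ C2 := by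
            rw [hC2]
            apply mul_le_mul_of_nonneg_left (Real.sqrt_le_sqrt (by linarith))
            exact mul_nonneg (mul_nonneg (mul_nonneg hb10.le (by linarith)) hsrnn) (by positivity)
        _ ≤ C1 + C2 := by linarith

lemma integrand_lower (k a1 b1 a2 sstar s' : ℝ) (hk0 : 0 < k) (h8 : 8 < s')
    (hb1c : b1 = k/2) (ha1lb : -(3*k*s'/8) ≤ a1) (ha1neg : a1 < 0)
    (hsstar0 : 0 ≤ sstar) (hsstar2 : sstar ≤ s'/2)
    (hkey : ∀ s : ℝ, a1 + b1 * s - a2 = b1 * (s - sstar)) :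
    ∀ s ∈ Set.Icc (5*s'/8) (3*s'/4),
      (k*s'/16) * (8/s'^3) * Real.exp (-(k^2*s'^3/64)) ≤
        (a1 + b1*s - a2) * (s*(s'-s)) ^ (-(3:ℝ)/2) *
          Real.exp (-(a1+b1*s)^2/(2*s) - (a1+b1*s-a2)^2/(2*(s'-s))) := by
  rintro s ⟨hs1, hs2⟩
  have hs0 : (0:ℝ) < s' := by linarith
  have hspos : (0:ℝ) < s := by linarith
  have hL : k*s'/16 ≤ a1 + b1*s - a2 := by
    rw [hkey, hb1c]
    nlinarith [mul_nonneg hk0.le (show (0:ℝ) ≤ s - sstar - s'/8 by linarith)]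
  have hQ1nn : 0 ≤ a1 + b1*s - a2 := le_trans (by positivity) hL
  have hbpos : 0 < s*(s'-s) := mul_pos hspos (by linarith)
  have hble : s*(s'-s) ≤ s'^2/4 := by nlinarith [sq_nonneg (s'-2*s)]
  have hXlb : 8/s'^3 ≤ (s*(s'-s)) ^ (-(3:ℝ)/2) := by
    calc 8/s'^3 = (s'^2/4) ^ (-(3:ℝ)/2) := (rpow_val32' hs0).symm
      _ ≤ _ := rpow_anti32' hbpos hble
  have hXnn : (0:ℝ) ≤ (s*(s'-s)) ^ (-(3:ℝ)/2) := Real.rpow_nonneg hbpos.le _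
  have hla : a1 + b1*s ≤ 3*k*s'/8 := by
    rw [hb1c]
    nlinarith [mul_nonneg hk0.le (show (0:ℝ) ≤ 3*s'/4 - s by linarith)]
  have hlb : -(3*k*s'/8) ≤ a1 + b1*s := by
    rw [hb1c]
    nlinarith [mul_nonneg hk0.le hspos.le]
  have hl2 : (a1+b1*s)^2 ≤ 9*k^2*s'^2/64 := by
    nlinarith [mul_nonneg (show (0:ℝ) ≤ 3*k*s'/8 - (a1+b1*s) by linarith)
      (show (0:ℝ) ≤ (a1+b1*s) + 3*k*s'/8 by linarith)]
  have hA : (a1+b1*s)^2/(2*s) ≤ 9*k^2*s'/64 := by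
    rw [div_le_iff₀ (by linarith : (0:ℝ) < 2*s)]
    nlinarith [hl2, mul_nonneg (mul_nonneg (sq_nonneg k) hs0.le)
      (show (0:ℝ) ≤ 2*s - s' by linarith)]
  have hX2 : (s - sstar)^2 ≤ 9*s'^2/16 := by
    nlinarith [mul_nonneg (show (0:ℝ) ≤ 3*s'/4 - (s-sstar) by linarith)
      (show (0:ℝ) ≤ (s-sstar) + 3*s'/4 by linarith)]
  have hB : (a1+b1*s-a2)^2/(2*(s'-s)) ≤ 9*k^2*s'/32 := by
    rw [hkey, hb1c, div_le_iff₀ (by linarith : (0:ℝ) < 2*(s'-s))]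
    have hinner : (0:ℝ) ≤ 9*s'*(s'-s)/16 - (s-sstar)^2/4 := by
      nlinarith [hX2, mul_nonneg hs0.le (show (0:ℝ) ≤ (s'-s) - s'/4 by linarith)]
    nlinarith [mul_nonneg (sq_nonneg k) hinner]
  have hsum : -(k^2*s'^3/64) ≤ -(a1+b1*s)^2/(2*s) - (a1+b1*s-a2)^2/(2*(s'-s)) := by
    have hnegA : -(a1+b1*s)^2/(2*s) = -((a1+b1*s)^2/(2*s)) := by ring
    have h27 : 27*(k^2*s') ≤ k^2*s'^3 := by
      nlinarith [mul_nonneg (mul_nonneg (sq_nonneg k) hs0.le)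
        (show (0:ℝ) ≤ s'^2 - 27 by nlinarith)]
    rw [hnegA]; linarith
  have hExp : Real.exp (-(k^2*s'^3/64)) ≤
      Real.exp (-(a1+b1*s)^2/(2*s) - (a1+b1*s-a2)^2/(2*(s'-s))) :=
    Real.exp_le_exp.mpr hsum
  apply mul_le_mul (mul_le_mul hL hXlb (by positivity) hQ1nn) hExp
    (Real.exp_nonneg _) (mul_nonneg hQ1nn hXnn)

lemma k2s_bound (β σ θ s' : ℝ) (hβ : 0 < β) (hσ : 0 < σ) (hθ : 0 < θ)
    (hσq : 8*σ^2/(β*θ^2) < s') : 16 < (2*β*θ^2/σ^2)*s' := by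
  have h1 : 8*σ^2 < s'*(β*θ^2) := (div_lt_iff₀ (by positivity)).mp hσq
  rw [div_mul_eq_mul_div, lt_div_iff₀ (by positivity : (0:ℝ) < σ^2)]
  nlinarith

lemma final_compare (k s' : ℝ) (hs0 : 0 < s') (h8 : 8 < s') (hk2s : 16 < k^2*s') :
    512/(9*Real.pi*s'^6) < k^2/(32*Real.pi*s') := by
  have hπ : (0:ℝ) < Real.pi := Real.pi_pos
  rw [div_lt_div_iff₀ (by positivity) (by positivity)]
  have hs2 : (64:ℝ) < s'^2 := by nlinarith
  have h84 : (4096:ℝ) < s'^4 := by nlinarith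
  have h2 : 16*s'^4 < (k^2*s')*s'^4 := mul_lt_mul_of_pos_right hk2s (by positivity)
  have key : (16384:ℝ) < 9*(k^2*s'^5) := by nlinarith [h2, h84]
  have key2 := mul_lt_mul_of_pos_right key (mul_pos hπ hs0)
  nlinarith [key2]

/-- Lemma 3 of the paper: for `s' > max(8, 1 + x0²/θ², 8σ²/(βθ²))`, the integral lower
bound `g2(s')` for the first-passage density satisfies
`g2(s') > (512/(9π))(x0/θ − 1)(s')⁻⁶ exp(−(β/32)(θ/σ)²(s')³)`. -/
theorem stmt_18 (β σ x0 θ s' : ℝ) (hβ : 0 < β) (hσ : 0 < σ) (hθ : 0 < θ)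
    (hx0 : θ < x0)
    (hs' : max (max 8 (1 + x0 ^ 2 / θ ^ 2)) (8 * σ ^ 2 / (β * θ ^ 2)) < s')
    (a1 b1 a2 sstar : ℝ) (l1 : ℝ → ℝ) (g2 : ℝ)
    (ha1 : a1 = (θ - x0) * Real.sqrt (2 * β) / σ)
    (hb1 : b1 = (θ / 2) * Real.sqrt (2 * β) / σ)
    (ha2 : a2 = (Real.sqrt (2 * β) / σ) * (θ * Real.sqrt (s' + 1) - x0))
    (hsstar : sstar = 2 * (Real.sqrt (s' + 1) - 1))
    (hl1 : ∀ s, l1 s = a1 + b1 * s)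
    (hg2 : g2 = (|a1| / (2 * Real.pi)) *
      ∫ s in sstar..s', (l1 s - a2) * (s * (s' - s)) ^ (-(3 : ℝ) / 2) *
        Real.exp (-(l1 s) ^ 2 / (2 * s) - (l1 s - a2) ^ 2 / (2 * (s' - s)))) :
    g2 > (512 / (9 * Real.pi)) * (x0 / θ - 1) * s' ^ (-(6 : ℝ)) *
      Real.exp (-(β / 32) * (θ / σ) ^ 2 * s' ^ 3) := by
  have hπ : (0:ℝ) < Real.pi := Real.pi_pos
  have hπne : Real.pi ≠ 0 := ne_of_gt hπ
  have hσ' : σ ≠ 0 := ne_of_gt hσ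
  have hθne : θ ≠ 0 := ne_of_gt hθ
  have h8 : (8:ℝ) < s' := lt_of_le_of_lt ((le_max_left _ _).trans (le_max_left _ _)) hs'
  have hxq : 1 + x0^2/θ^2 < s' :=
    lt_of_le_of_lt ((le_max_right _ _).trans (le_max_left _ _)) hs'
  have hσq : 8*σ^2/(β*θ^2) < s' := lt_of_le_of_lt (le_max_right _ _) hs'
  have hs0 : (0:ℝ) < s' := by linarith
  have hs'ne : s' ≠ 0 := ne_of_gt hs0
  -- key algebraic identity
  have hkey : ∀ s : ℝ, a1 + b1 * s - a2 = b1 * (s - sstar) := by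
    intro s
    rw [ha1, ha2, hb1, hsstar]
    ring
  set c : ℝ := Real.sqrt (2*β) / σ with hc
  have hsqrt2β : 0 < Real.sqrt (2*β) := Real.sqrt_pos.mpr (by linarith)
  have hc0 : 0 < c := div_pos hsqrt2β hσ
  set k : ℝ := θ * c with hkdef
  have hk0 : 0 < k := mul_pos hθ hc0
  have hsq2β : Real.sqrt (2*β) ^ 2 = 2*β := Real.sq_sqrt (by linarith)
  have hk2 : k^2 = 2*β*θ^2/σ^2 := by
    rw [hkdef, hc, mul_pow, div_pow, hsq2β]; ring
  -- sqrt(s'+1) facts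
  have ht3 : (3:ℝ) ≤ Real.sqrt (s'+1) := by
    rw [show (3:ℝ) = Real.sqrt 9 by
      rw [show (9:ℝ) = 3^2 by norm_num, Real.sqrt_sq (by norm_num)]]
    exact Real.sqrt_le_sqrt (by linarith)
  have hsstar4 : 4 ≤ sstar := by rw [hsstar]; linarith
  have hsstar2 : sstar ≤ s'/2 := by
    have hle : Real.sqrt (s'+1) ≤ s'/4 + 1 := by
      rw [show s'/4+1 = Real.sqrt ((s'/4+1)^2) from (Real.sqrt_sq (by linarith)).symm]
      exact Real.sqrt_le_sqrt (by nlinarith)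
    rw [hsstar]; linarith
  have hss' : sstar < s' := by linarith
  -- x0 bound
  have hθ2 : (0:ℝ) < θ^2 := by positivity
  have hx02 : x0^2 < (s'-1)*θ^2 := by
    have h1 : x0^2/θ^2 < s' - 1 := by linarith
    exact (div_lt_iff₀ hθ2).mp h1
  have hx0b : x0 < 3*θ*s'/8 := by
    have h2 : x0^2 < (3*θ*s'/8)^2 := by nlinarith
    exact lt_of_pow_lt_pow_left₀ 2 (by positivity) h2
  -- a1, b1 facts
  have ha1c : a1 = (θ - x0)*c := by rw [ha1, hc]; ring
  have hb1c : b1 = k/2 := by rw [hb1, hkdef, hc]; ring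
  have hb10 : 0 < b1 := by rw [hb1c]; positivity
  have ha1neg : a1 < 0 := by
    rw [ha1c]; exact mul_neg_of_neg_of_pos (by linarith) hc0
  have ha1abs : |a1| = (x0/θ - 1)*k := by
    rw [abs_of_neg ha1neg, ha1c, hkdef]; field_simp; ring
  have ha1lb : -(3*k*s'/8) ≤ a1 := by
    rw [ha1c, hkdef]
    have h1 : 0 ≤ (θ - x0 + 3*θ*s'/8) * c := mul_nonneg (by linarith) hc0.le
    linarith [h1]
  -- integral machinery
  simp only [hl1] at hg2
  have hInt : IntervalIntegrable (fun s => (a1 + b1*s - a2) * (s*(s'-s)) ^ (-(3:ℝ)/2) *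
      Real.exp (-(a1+b1*s)^2/(2*s) - (a1+b1*s-a2)^2/(2*(s'-s)))) volume sstar s' :=
    integrand_integrable a1 b1 a2 sstar s' hb10 hsstar4 hss' hkey
  have hsub : ∀ p q : ℝ, sstar ≤ p → p ≤ q → q ≤ s' →
      IntervalIntegrable (fun s => (a1 + b1*s - a2) * (s*(s'-s)) ^ (-(3:ℝ)/2) *
        Real.exp (-(a1+b1*s)^2/(2*s) - (a1+b1*s-a2)^2/(2*(s'-s)))) volume p q := by
    intro p q hp hpq hq
    apply hInt.mono_set
    rw [Set.uIcc_of_le hpq, Set.uIcc_of_le hss'.le]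
    exact Set.Icc_subset_Icc hp hq
  have hInt1 := hsub sstar (5*s'/8) le_rfl (by linarith) (by linarith)
  have hInt2 := hsub (5*s'/8) (3*s'/4) (by linarith) (by linarith) (by linarith)
  have hInt3 := hsub (3*s'/4) s' (by linarith) (by linarith) le_rfl
  have hInt23 := hsub (5*s'/8) s' (by linarith) (by linarith) le_rfl
  have hadd1 := intervalIntegral.integral_add_adjacent_intervals hInt1 hInt23
  have hadd2 := intervalIntegral.integral_add_adjacent_intervals hInt2 hInt3
  have hnn1 : 0 ≤ ∫ s in sstar..(5*s'/8), (a1 + b1*s - a2) * (s*(s'-s)) ^ (-(3:ℝ)/2) *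
      Real.exp (-(a1+b1*s)^2/(2*s) - (a1+b1*s-a2)^2/(2*(s'-s))) := by
    apply intervalIntegral.integral_nonneg (by linarith)
    intro u hu
    exact integrand_nonneg a1 b1 a2 sstar s' hb10.le (by linarith) hkey u hu.1
      (by have := hu.2; linarith)
  have hnn3 : 0 ≤ ∫ s in (3*s'/4)..s', (a1 + b1*s - a2) * (s*(s'-s)) ^ (-(3:ℝ)/2) *
      Real.exp (-(a1+b1*s)^2/(2*s) - (a1+b1*s-a2)^2/(2*(s'-s))) := by
    apply intervalIntegral.integral_nonneg (by linarith)
    intro u hu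
    exact integrand_nonneg a1 b1 a2 sstar s' hb10.le (by linarith) hkey u
      (by have := hu.1; linarith) hu.2
  have hmid : (3*s'/4 - 5*s'/8) * ((k*s'/16) * (8/s'^3) * Real.exp (-(k^2*s'^3/64))) ≤
      ∫ s in (5*s'/8)..(3*s'/4), (a1 + b1*s - a2) * (s*(s'-s)) ^ (-(3:ℝ)/2) *
        Real.exp (-(a1+b1*s)^2/(2*s) - (a1+b1*s-a2)^2/(2*(s'-s))) := by
    have hm := intervalIntegral.integral_mono_on (by linarith : 5*s'/8 ≤ 3*s'/4)
      (intervalIntegrable_const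
        (c := (k*s'/16) * (8/s'^3) * Real.exp (-(k^2*s'^3/64)))) hInt2
      (integrand_lower k a1 b1 a2 sstar s' hk0 h8 hb1c ha1lb ha1neg (by linarith) hsstar2 hkey)
    rw [intervalIntegral.integral_const, smul_eq_mul] at hm
    linarith [hm]
  have hIlow : (s'/8) * ((k*s'/16) * (8/s'^3) * Real.exp (-(k^2*s'^3/64))) ≤
      ∫ s in sstar..s', (a1 + b1*s - a2) * (s*(s'-s)) ^ (-(3:ℝ)/2) *
        Real.exp (-(a1+b1*s)^2/(2*s) - (a1+b1*s-a2)^2/(2*(s'-s))) := by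
    have h78 : (3*s'/4 - 5*s'/8) = s'/8 := by ring
    rw [h78] at hmid
    linarith [hadd1, hadd2, hnn1, hnn3, hmid]
  -- final numeric comparison
  have hrp : s' ^ (-(6:ℝ)) = (s'^6)⁻¹ := by
    rw [Real.rpow_neg hs0.le, show (6:ℝ) = ((6:ℕ):ℝ) by norm_num, Real.rpow_natCast]
  have hexp_eq : -(β/32)*(θ/σ)^2*s'^3 = -(k^2*s'^3/64) := by
    rw [hk2]; field_simp; ring
  have hk2s : 16 < k^2*s' := by
    rw [hk2]; exact k2s_bound β σ θ s' hβ hσ hθ hσq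
  have hfc : 512/(9*Real.pi*s'^6) < k^2/(32*Real.pi*s') := final_compare k s' hs0 h8 hk2s
  have hQpos : 0 < x0/θ - 1 := by
    have : 1 < x0/θ := (one_lt_div hθ).mpr hx0
    linarith
  have hW : 0 < Real.exp (-(k^2*s'^3/64)) := Real.exp_pos _
  have hcoeff : 0 ≤ |a1|/(2*Real.pi) := by positivity
  rw [hg2]
  calc (512 / (9 * Real.pi)) * (x0 / θ - 1) * s' ^ (-(6:ℝ)) *
        Real.exp (-(β/32) * (θ/σ)^2 * s'^3)
      = (x0/θ - 1) * Real.exp (-(k^2*s'^3/64)) * (512/(9*Real.pi*s'^6)) := by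
        rw [hrp, hexp_eq]; ring
    _ < (x0/θ - 1) * Real.exp (-(k^2*s'^3/64)) * (k^2/(32*Real.pi*s')) := by
        exact mul_lt_mul_of_pos_left hfc (mul_pos hQpos hW)
    _ = (|a1|/(2*Real.pi)) *
        ((s'/8) * ((k*s'/16) * (8/s'^3) * Real.exp (-(k^2*s'^3/64)))) := by
        rw [ha1abs]; field_simp; ring
    _ ≤ (|a1| / (2 * Real.pi)) *
        ∫ s in sstar..s', (a1 + b1*s - a2) * (s*(s'-s)) ^ (-(3:ℝ)/2) *
          Real.exp (-(a1+b1*s)^2/(2*s) - (a1+b1*s-a2)^2/(2*(s'-s))) :=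
        mul_le_mul_of_nonneg_left hIlow hcoeff
end

section
/- Fix β > 0, σ > 0, x0 > θ > 0. Define g2 as follows: for s' > 0, with a1 = (θ − x0)√(2β)/σ, b1 = (θ/2)√(2β)/σ, a2 = (√(2β)/σ)(θ√(s'+1) − x0), l1(s) = a1 + b1·s, s* = 2(√(s'+1) − 1), let g2(s') = (|a1|/(2π)) ∫_{s*}^{s'} (l1(s) − a2)·(s(s'−s))^{−3/2}·exp(−l1(s)²/(2s) − (l1(s)−a2)²/(2(s'−s))) ds. Set k = (1024β/(9π))(x0/θ − 1), p = 1 + (β/32)(θ/σ)², and u = (1/(2β))·log(1 + max(8, 1 + x0²/θ², 8σ²/(βθ²))). Then for every t > u, 2β·e^{2βt}·g2(e^{2βt} − 1) > k·exp(−p·e^{6βt}). -/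
set_option maxHeartbeats 1000000

open MeasureTheory

lemma aux_cube_le_exp (y : ℝ) (hy : 0 ≤ y) : (y/3)^3 ≤ Real.exp y := by
  have h := Real.add_one_le_exp (y/3)
  have h2 : (y/3+1)^3 ≤ (Real.exp (y/3))^3 :=
    pow_le_pow_left₀ (by positivity) h 3
  calc (y/3)^3 ≤ (y/3+1)^3 := by nlinarith
    _ ≤ (Real.exp (y/3))^3 := h2
    _ = Real.exp y := by rw [← Real.exp_nat_mul]; norm_num; ring_nf

lemma aux_rpow_neg32 (x : ℝ) (hx : 0 ≤ x) : x ^ (-(3:ℝ)/2) = (Real.sqrt x ^ 3)⁻¹ := by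
  rw [show (-(3:ℝ)/2) = (1/2) * ((-3 : ℤ) : ℝ) by norm_num, Real.rpow_mul hx,
    Real.rpow_intCast, ← Real.sqrt_eq_rpow]
  rw [show (-3 : ℤ) = -(3:ℕ) by norm_num, zpow_neg, zpow_natCast]

lemma aux_inv3 (x y : ℝ) (hx : 0 < x) (hxy : x ≤ y) :
    ((Real.sqrt y)^3)⁻¹ ≤ ((Real.sqrt x)^3)⁻¹ := by
  have h1 : Real.sqrt x ^ 3 ≤ Real.sqrt y ^ 3 :=
    pow_le_pow_left₀ (Real.sqrt_nonneg _) (Real.sqrt_le_sqrt hxy) 3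
  have h2 : 0 < Real.sqrt x ^ 3 := by positivity
  exact inv_anti₀ h2 h1

lemma aux_sqrtcube (x cc : ℝ) (hx : 0 < x) (hcc : 0 < cc) :
    ((Real.sqrt x)^3)⁻¹ * (27*x^3/cc^3) = 27*(Real.sqrt x)^3/cc^3 := by
  have h : Real.sqrt x ^ 2 = x := Real.sq_sqrt hx.le
  have hs : 0 < Real.sqrt x := Real.sqrt_pos.mpr hx
  have h3 : x^3 = (Real.sqrt x)^6 := by
    calc x^3 = (Real.sqrt x ^ 2)^3 := by rw [h]
      _ = (Real.sqrt x)^6 := by ring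
  rw [h3]
  field_simp

lemma integral_bound (b1 a1 st s' : ℝ) (hb1 : 0 < b1) (ha1 : a1 < 0) (hst0 : 0 < st)
    (hst58 : st ≤ 5*s'/8) (h8 : 8 < s') (f : ℝ → ℝ)
    (hfval : ∀ s, f s = b1*(s-st) * (s*(s'-s)) ^ (-(3:ℝ)/2) *
      Real.exp (-(a1+b1*s)^2/(2*s) - (b1*(s-st))^2/(2*(s'-s)))) :
    b1/(16*s') * Real.exp (-(2*a1^2/(3*s') + 13*b1^2*s'/6)) ≤ ∫ s in st..s', f s := by
  have hs0 : (0:ℝ) < s' := by linarith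
  have hsts : st < s' := by linarith
  have hL : 0 < s' - st := by linarith
  -- splitting of the rpow
  have hsplitpow : ∀ s : ℝ, st ≤ s → s ≤ s' →
      (s*(s'-s)) ^ (-(3:ℝ)/2) = ((Real.sqrt s)^3)⁻¹ * ((Real.sqrt (s'-s))^3)⁻¹ := by
    intro s h1 h2
    rw [aux_rpow_neg32 _ (mul_nonneg (by linarith) (by linarith)),
      Real.sqrt_mul (by linarith) (s'-s), mul_pow, mul_inv]
  -- nonnegativity
  have hf_nonneg : ∀ s ∈ Set.Icc st s', 0 ≤ f s := by
    intro s hs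
    rw [hfval]
    have h2 : (0:ℝ) ≤ (s*(s'-s)) ^ (-(3:ℝ)/2) :=
      Real.rpow_nonneg (mul_nonneg (by linarith [hs.1]) (by linarith [hs.2])) _
    exact mul_nonneg (mul_nonneg (mul_nonneg hb1.le (by linarith [hs.1])) h2)
      (Real.exp_pos _).le
  -- uniform upper bound
  obtain ⟨C1, hC1⟩ : ∃ C1, C1 = b1*(s'-st)*((Real.sqrt st)^3)⁻¹*((Real.sqrt ((s'-st)/2))^3)⁻¹ :=
    ⟨_, rfl⟩
  obtain ⟨cc, hcc⟩ : ∃ cc, cc = b1^2*(s'-st)^2/8 := ⟨_, rfl⟩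
  have hccpos : 0 < cc := by rw [hcc]; positivity
  obtain ⟨C2, hC2⟩ : ∃ C2,
      C2 = b1*(s'-st)*((Real.sqrt ((st+s')/2))^3)⁻¹*(27*(Real.sqrt (s'-st))^3/cc^3) :=
    ⟨_, rfl⟩
  have hC1pos : 0 ≤ C1 := by rw [hC1]; positivity
  have hC2pos : 0 ≤ C2 := by rw [hC2]; positivity
  have hbound : ∀ s ∈ Set.Icc st s', f s ≤ C1 + C2 := by
    intro s hs
    have hspos : 0 < s := lt_of_lt_of_le hst0 hs.1
    rcases le_or_gt s ((st+s')/2) with hcase | hcase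
    · -- left half : exp ≤ 1
      have hx : 0 < s' - s := by
        have : s < s' := by linarith
        linarith
      rw [hfval, hsplitpow s hs.1 hs.2]
      have e1 : b1*(s-st) ≤ b1*(s'-st) :=
        mul_le_mul_of_nonneg_left (by linarith [hs.2]) hb1.le
      have e2a := aux_inv3 st s hst0 hs.1
      have e2b := aux_inv3 ((s'-st)/2) (s'-s) (by linarith) (by linarith)
      have e3 : Real.exp (-(a1+b1*s)^2/(2*s) - (b1*(s-st))^2/(2*(s'-s))) ≤ 1 := by
        rw [Real.exp_le_one_iff]
        have d1 : 0 ≤ (a1+b1*s)^2/(2*s) := div_nonneg (sq_nonneg _) (by linarith)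
        have d2 : 0 ≤ (b1*(s-st))^2/(2*(s'-s)) := div_nonneg (sq_nonneg _) (by linarith)
        have e : -(a1+b1*s)^2/(2*s) - (b1*(s-st))^2/(2*(s'-s))
            = -((a1+b1*s)^2/(2*s) + (b1*(s-st))^2/(2*(s'-s))) := by ring
        rw [e]
        exact neg_nonpos_of_nonneg (add_nonneg d1 d2)
      have hnn1 : 0 ≤ b1*(s-st) := mul_nonneg hb1.le (by linarith [hs.1])
      have hnn2 : (0:ℝ) ≤ ((Real.sqrt s)^3)⁻¹ * ((Real.sqrt (s'-s))^3)⁻¹ := by positivity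
      calc b1*(s-st) * (((Real.sqrt s)^3)⁻¹ * ((Real.sqrt (s'-s))^3)⁻¹) *
            Real.exp (-(a1+b1*s)^2/(2*s) - (b1*(s-st))^2/(2*(s'-s)))
          ≤ b1*(s'-st) * (((Real.sqrt st)^3)⁻¹ * ((Real.sqrt ((s'-st)/2))^3)⁻¹) * 1 := by
            have step1 : b1*(s-st) * (((Real.sqrt s)^3)⁻¹ * ((Real.sqrt (s'-s))^3)⁻¹)
                ≤ b1*(s'-st) * (((Real.sqrt st)^3)⁻¹ * ((Real.sqrt ((s'-st)/2))^3)⁻¹) :=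
              mul_le_mul e1 (mul_le_mul e2a e2b (by positivity) (by positivity))
                hnn2 (mul_nonneg hb1.le hL.le)
            exact mul_le_mul step1 e3 (Real.exp_pos _).le
              (mul_nonneg (mul_nonneg hb1.le hL.le) (by positivity))
        _ = C1 := by rw [hC1]; ring
        _ ≤ C1 + C2 := by linarith
    · -- right half
      rcases eq_or_lt_of_le hs.2 with heq | hlt
      · rw [hfval, heq, sub_self, mul_zero, Real.zero_rpow (by norm_num)]
        rw [mul_zero, zero_mul]
        linarith
      · have hx : 0 < s' - s := by linarith
        have hx2 : s' - s ≤ (s'-st)/2 := by linarith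
        have hmid : (0:ℝ) < (st+s')/2 := by linarith
        rw [hfval, hsplitpow s hs.1 hs.2]
        have e1 : b1*(s-st) ≤ b1*(s'-st) :=
          mul_le_mul_of_nonneg_left (by linarith [hs.2]) hb1.le
        have e2a := aux_inv3 ((st+s')/2) s hmid hcase.le
        -- exponential beats the singularity
        have hsst : (s'-st)/2 ≤ s - st := by linarith
        have hnum : cc/(s'-s) ≤ (b1*(s-st))^2/(2*(s'-s)) := by
          rw [div_le_div_iff₀ hx (by linarith)]
          rw [hcc]
          nlinarith [mul_le_mul_of_nonneg_left
            (mul_self_le_mul_self (by linarith : (0:ℝ) ≤ (s'-st)/2) hsst)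
            (show (0:ℝ) ≤ 2*b1^2 by positivity), hx.le]
        have harg : Real.exp (-(a1+b1*s)^2/(2*s) - (b1*(s-st))^2/(2*(s'-s)))
            ≤ Real.exp (-(cc/(s'-s))) := by
          apply Real.exp_le_exp.mpr
          have d1 : 0 ≤ (a1+b1*s)^2/(2*s) := div_nonneg (sq_nonneg _) (by linarith)
          have e : -(a1+b1*s)^2/(2*s) - (b1*(s-st))^2/(2*(s'-s))
              = -((a1+b1*s)^2/(2*s) + (b1*(s-st))^2/(2*(s'-s))) := by ring
          rw [e]
          have := hnum
          linarith
        have h27 : Real.exp (-(cc/(s'-s))) ≤ 27*(s'-s)^3/cc^3 := by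
          rw [Real.exp_neg]
          have hy : (0:ℝ) < cc/(s'-s) := by positivity
          have hcb := aux_cube_le_exp (cc/(s'-s)) hy.le
          have h0 : (0:ℝ) < (cc/(s'-s)/3)^3 := by positivity
          calc (Real.exp (cc/(s'-s)))⁻¹ ≤ ((cc/(s'-s)/3)^3)⁻¹ := inv_anti₀ h0 hcb
            _ = 27*(s'-s)^3/cc^3 := by
                field_simp
                ring
        have key2 : ((Real.sqrt (s'-s))^3)⁻¹ *
            Real.exp (-(a1+b1*s)^2/(2*s) - (b1*(s-st))^2/(2*(s'-s)))
            ≤ 27*(Real.sqrt (s'-st))^3/cc^3 := by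
          calc ((Real.sqrt (s'-s))^3)⁻¹ *
              Real.exp (-(a1+b1*s)^2/(2*s) - (b1*(s-st))^2/(2*(s'-s)))
              ≤ ((Real.sqrt (s'-s))^3)⁻¹ * (27*(s'-s)^3/cc^3) := by
                apply mul_le_mul_of_nonneg_left (harg.trans h27) (by positivity)
            _ = 27*(Real.sqrt (s'-s))^3/cc^3 := aux_sqrtcube _ _ hx hccpos
            _ ≤ 27*(Real.sqrt (s'-st))^3/cc^3 := by
                gcongr
                · linarith
        have hnn1 : 0 ≤ b1*(s-st) := mul_nonneg hb1.le (by linarith [hs.1])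
        calc b1*(s-st) * (((Real.sqrt s)^3)⁻¹ * ((Real.sqrt (s'-s))^3)⁻¹) *
              Real.exp (-(a1+b1*s)^2/(2*s) - (b1*(s-st))^2/(2*(s'-s)))
            = (b1*(s-st)) * ((Real.sqrt s)^3)⁻¹ * (((Real.sqrt (s'-s))^3)⁻¹ *
              Real.exp (-(a1+b1*s)^2/(2*s) - (b1*(s-st))^2/(2*(s'-s)))) := by ring
          _ ≤ (b1*(s'-st)) * ((Real.sqrt ((st+s')/2))^3)⁻¹ * (27*(Real.sqrt (s'-st))^3/cc^3) := by
              have step1 : b1*(s-st) * ((Real.sqrt s)^3)⁻¹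
                  ≤ b1*(s'-st) * ((Real.sqrt ((st+s')/2))^3)⁻¹ :=
                mul_le_mul e1 e2a (by positivity) (mul_nonneg hb1.le hL.le)
              exact mul_le_mul step1 key2
                (mul_nonneg (by positivity) (Real.exp_pos _).le)
                (mul_nonneg (mul_nonneg hb1.le hL.le) (by positivity))
          _ = C2 := by rw [hC2]
          _ ≤ C1 + C2 := by linarith
  -- integrability
  have hmeas : Measurable f := by
    have : f = fun s => b1*(s-st) * (s*(s'-s)) ^ (-(3:ℝ)/2) *
        Real.exp (-(a1+b1*s)^2/(2*s) - (b1*(s-st))^2/(2*(s'-s))) := funext hfval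
    rw [this]
    fun_prop
  have hIoc : Set.uIoc st s' = Set.Ioc st s' := Set.uIoc_of_le hsts.le
  have hInt : IntervalIntegrable f volume st s' := by
    apply IntervalIntegrable.mono_fun (intervalIntegrable_const (c := C1 + C2))
      hmeas.aestronglyMeasurable
    rw [Filter.EventuallyLE, ae_restrict_iff' measurableSet_uIoc]
    apply Filter.Eventually.of_forall
    intro x hx
    rw [hIoc] at hx
    have hx' : x ∈ Set.Icc st s' := Set.Ioc_subset_Icc_self hx
    rw [Real.norm_eq_abs, Real.norm_eq_abs, abs_of_nonneg (hf_nonneg x hx')]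
    exact le_trans (hbound x hx') (le_abs_self _)
  -- split the integral
  have hsta : st ≤ 3*s'/4 := by linarith
  have hab : (3*s'/4 : ℝ) ≤ 13*s'/16 := by linarith
  have hbs : (13*s'/16 : ℝ) ≤ s' := by linarith
  have hsub1 : Set.uIcc st (3*s'/4) ⊆ Set.uIcc st s' := by
    rw [Set.uIcc_of_le hsts.le, Set.uIcc_of_le hsta]
    exact Set.Icc_subset_Icc le_rfl (by linarith)
  have hsub2 : Set.uIcc (3*s'/4) (13*s'/16) ⊆ Set.uIcc st s' := by
    rw [Set.uIcc_of_le hsts.le, Set.uIcc_of_le hab]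
    exact Set.Icc_subset_Icc hsta hbs
  have hsub3 : Set.uIcc (13*s'/16) s' ⊆ Set.uIcc st s' := by
    rw [Set.uIcc_of_le hsts.le, Set.uIcc_of_le hbs]
    exact Set.Icc_subset_Icc (by linarith) le_rfl
  have hsub4 : Set.uIcc (3*s'/4) s' ⊆ Set.uIcc st s' := by
    rw [Set.uIcc_of_le hsts.le, Set.uIcc_of_le (le_trans hab hbs)]
    exact Set.Icc_subset_Icc hsta le_rfl
  have hI1 := hInt.mono_set hsub1
  have hI2 := hInt.mono_set hsub2
  have hI3 := hInt.mono_set hsub3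
  have hI4 := hInt.mono_set hsub4
  have hsplit1 : ∫ s in st..s', f s
      = (∫ s in st..(3*s'/4), f s) + ∫ s in (3*s'/4)..s', f s :=
    (intervalIntegral.integral_add_adjacent_intervals hI1 hI4).symm
  have hsplit2 : ∫ s in (3*s'/4)..s', f s
      = (∫ s in (3*s'/4)..(13*s'/16), f s) + ∫ s in (13*s'/16)..s', f s :=
    (intervalIntegral.integral_add_adjacent_intervals hI2 hI3).symm
  have hnn1 : 0 ≤ ∫ s in st..(3*s'/4), f s := by
    apply intervalIntegral.integral_nonneg hsta
    intro x hx
    exact hf_nonneg x ⟨hx.1, le_trans hx.2 (by linarith)⟩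
  have hnn3 : 0 ≤ ∫ s in (13*s'/16)..s', f s := by
    apply intervalIntegral.integral_nonneg hbs
    intro x hx
    exact hf_nonneg x ⟨le_trans (by linarith) hx.1, hx.2⟩
  -- pointwise lower bound on the middle interval
  obtain ⟨E0, hE0⟩ : ∃ E0, E0 = 2*a1^2/(3*s') + 13*b1^2*s'/6 := ⟨_, rfl⟩
  obtain ⟨c0, hc0⟩ : ∃ c0, c0 = b1*(s'/8) * (8/s'^3) * Real.exp (-E0) := ⟨_, rfl⟩
  have hptwise : ∀ x ∈ Set.Icc (3*s'/4) (13*s'/16), c0 ≤ f x := by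
    intro s hsx
    have hs34 : 3*s'/4 ≤ s := hsx.1
    have hs1316 : s ≤ 13*s'/16 := hsx.2
    have hspos : 0 < s := by linarith
    have hxs : 0 < s' - s := by linarith
    have hsst : st ≤ s := by linarith
    -- factor bounds
    have hA : b1*(s'/8) ≤ b1*(s-st) :=
      mul_le_mul_of_nonneg_left (by linarith) hb1.le
    have hR : 8/s'^3 ≤ (s*(s'-s)) ^ (-(3:ℝ)/2) := by
      rw [aux_rpow_neg32 _ (mul_nonneg hspos.le hxs.le)]
      have hu4 : s*(s'-s) ≤ (s'/2)^2 := by nlinarith [sq_nonneg (2*s-s')]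
      have hsq1 : Real.sqrt (s*(s'-s)) ≤ s'/2 := by
        calc Real.sqrt (s*(s'-s)) ≤ Real.sqrt ((s'/2)^2) := Real.sqrt_le_sqrt hu4
          _ = s'/2 := Real.sqrt_sq (by linarith)
      have hpow : Real.sqrt (s*(s'-s))^3 ≤ (s'/2)^3 :=
        pow_le_pow_left₀ (Real.sqrt_nonneg _) hsq1 3
      have heq : ((s'/2)^3)⁻¹ = 8/s'^3 := by
        rw [div_pow]
        rw [inv_div]
        norm_num
      rw [← heq]
      exact inv_anti₀ (by positivity) hpow
    have hX : Real.exp (-E0) ≤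
        Real.exp (-(a1+b1*s)^2/(2*s) - (b1*(s-st))^2/(2*(s'-s))) := by
      apply Real.exp_le_exp.mpr
      have hT1 : (a1+b1*s)^2/(2*s) ≤ 2*a1^2/(3*s') + 13*b1^2*s'/32 := by
        have h1 : (a1+b1*s)^2 ≤ a1^2 + b1^2*s^2 := by
          nlinarith [mul_nonneg (neg_nonneg.mpr ha1.le) (mul_nonneg hb1.le hspos.le)]
        have hd : (a1+b1*s)^2/(2*s) ≤ (a1^2 + b1^2*s^2)/(2*s) := by
          rw [div_le_div_iff₀ (by linarith) (by linarith)]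
          nlinarith [mul_le_mul_of_nonneg_right h1 (show (0:ℝ) ≤ 2*s by linarith)]
        have hsplitd : (a1^2 + b1^2*s^2)/(2*s) = a1^2/(2*s) + b1^2*s^2/(2*s) := by ring
        have e1 : a1^2/(2*s) ≤ 2*a1^2/(3*s') := by
          rw [div_le_div_iff₀ (by linarith) (by linarith)]
          nlinarith [mul_nonneg (sq_nonneg a1) (show (0:ℝ) ≤ 4*s - 3*s' by linarith)]
        have e2 : b1^2*s^2/(2*s) ≤ 13*b1^2*s'/32 := by
          have hss : b1^2*s^2/(2*s) = b1^2*s/2 := by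
            field_simp
          rw [hss]
          nlinarith [mul_nonneg (sq_nonneg b1) (show (0:ℝ) ≤ 13*s' - 16*s by linarith)]
        linarith [hd, hsplitd.le, e1, e2, hsplitd.ge]
      have hT2 : (b1*(s-st))^2/(2*(s'-s)) ≤ 169*b1^2*s'/96 := by
        have h0 : (s-st)^2 ≤ (13*s'/16)^2 :=
          pow_le_pow_left₀ (by linarith) (by linarith) 2
        have h1 : (b1*(s-st))^2 ≤ b1^2*(13*s'/16)^2 := by
          have := mul_le_mul_of_nonneg_left h0 (sq_nonneg b1)
          nlinarith [this]
        have h2 : (3*s'/8 : ℝ) ≤ 2*(s'-s) := by linarith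
        have h3 : (b1*(s-st))^2/(2*(s'-s)) ≤ (b1^2*(13*s'/16)^2)/(3*s'/8) :=
          div_le_div₀ (by positivity) h1 (by linarith) h2
        have h4 : (b1^2*(13*s'/16)^2)/(3*s'/8) = 169*b1^2*s'/96 := by
          field_simp
          ring
        rw [h4] at h3
        exact h3
      have he : -(a1+b1*s)^2/(2*s) - (b1*(s-st))^2/(2*(s'-s))
          = -((a1+b1*s)^2/(2*s) + (b1*(s-st))^2/(2*(s'-s))) := by ring
      rw [he, hE0]
      have : (a1+b1*s)^2/(2*s) + (b1*(s-st))^2/(2*(s'-s))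
          ≤ 2*a1^2/(3*s') + 13*b1^2*s'/6 := by linarith [hT1, hT2]
      linarith
    -- combine
    rw [hfval, hc0]
    have step1 : b1*(s'/8) * (8/s'^3) ≤ b1*(s-st) * ((s*(s'-s)) ^ (-(3:ℝ)/2)) :=
      mul_le_mul hA hR (by positivity) (mul_nonneg hb1.le (by linarith))
    exact mul_le_mul step1 hX (Real.exp_pos _).le
      (mul_nonneg (mul_nonneg hb1.le (by linarith))
        (Real.rpow_nonneg (mul_nonneg hspos.le hxs.le) _))
  have hmid : (s'/16) * c0 ≤ ∫ s in (3*s'/4)..(13*s'/16), f s := by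
    have h := intervalIntegral.integral_mono_on hab
      (intervalIntegrable_const (c := c0)) hI2 hptwise
    rw [intervalIntegral.integral_const, smul_eq_mul] at h
    calc (s'/16) * c0 = (13*s'/16 - 3*s'/4) * c0 := by ring
      _ ≤ ∫ s in (3*s'/4)..(13*s'/16), f s := h
  -- conclude
  have hfinal : b1/(16*s') * Real.exp (-E0) = (s'/16) * c0 := by
    rw [hc0]
    field_simp
  rw [hE0] at hfinal
  rw [hfinal]
  calc (s'/16) * c0 ≤ ∫ s in (3*s'/4)..(13*s'/16), f s := hmid
    _ ≤ (∫ s in st..(3*s'/4), f s) + ((∫ s in (3*s'/4)..(13*s'/16), f s)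
        + ∫ s in (13*s'/16)..s', f s) := by linarith
    _ = ∫ s in st..s', f s := by rw [hsplit1, hsplit2]

lemma final_arith (β σ θ x0 s' X Y c b1 : ℝ) (hβ : 0 < β) (hσ : 0 < σ) (hθ : 0 < θ)
    (hx0 : θ < x0) (hs' : 8 < s') (hX : 0 < X) (hY : 0 < Y)
    (hcb : c * b1 * σ^2 = β * θ)
    (hexp : 16384 * σ^2 * Y < 9 * β * θ^2 * X) :
    (1024*β/(9*Real.pi))*(x0/θ-1) * Y <
      2*β*(s'+1)*((x0-θ)*c/(2*Real.pi) * (b1/(16*s')*X)) := by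
  have hπ := Real.pi_pos
  have hs0 : (0:ℝ) < s' := by linarith
  have hxθ : (0:ℝ) < x0 - θ := by linarith
  have e1 : 2*β*(s'+1)*((x0-θ)*c/(2*Real.pi) * (b1/(16*s')*X))
      = (2*β*(s'+1)*(x0-θ)*(c*b1)*X) / (32*Real.pi*s') := by ring
  have e2 : (1024*β/(9*Real.pi))*(x0/θ-1) * Y = (1024*β*(x0-θ)*Y)/(9*Real.pi*θ) := by
    field_simp
  rw [e1, e2, div_lt_div_iff₀ (by positivity) (by positivity)]
  have hσ2 : (0:ℝ) < σ^2 := by positivity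
  rw [← mul_lt_mul_iff_left₀ hσ2]
  have A : 1024*β*(x0-θ)*Y*(32*Real.pi*s') * σ^2
      = 2*β*(x0-θ)*Real.pi*s'*(16384*σ^2*Y) := by ring
  have B : 2*β*(s'+1)*(x0-θ)*(c*b1)*X*(9*Real.pi*θ) * σ^2
      = 2*β*(x0-θ)*Real.pi*(s'+1)*(9*β*θ^2*X) := by
    calc 2*β*(s'+1)*(x0-θ)*(c*b1)*X*(9*Real.pi*θ) * σ^2
        = 2*β*(s'+1)*(x0-θ)*X*(9*Real.pi*θ)*(c*b1*σ^2) := by ring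
      _ = 2*β*(s'+1)*(x0-θ)*X*(9*Real.pi*θ)*(β*θ) := by rw [hcb]
      _ = 2*β*(x0-θ)*Real.pi*(s'+1)*(9*β*θ^2*X) := by ring
  rw [A, B]
  have key := mul_lt_mul_of_pos_left hexp
    (show (0:ℝ) < 2*β*(x0-θ)*Real.pi*s' by positivity)
  nlinarith [key, mul_nonneg (show (0:ℝ) ≤ 2*β*(x0-θ)*Real.pi by positivity)
      (show (0:ℝ) ≤ 9*β*θ^2*X by positivity)]

lemma exp_arith (β σ θ x0 s' E0 p : ℝ) (hβ : 0 < β) (hσ : 0 < σ) (hθ : 0 < θ)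
    (hx0 : θ < x0) (hs' : 8 < s')
    (hxs : x0^2/θ^2 < s') (hKs : 8*σ^2/(β*θ^2) < s')
    (hE0 : E0 = 4*β*(x0-θ)^2/(3*σ^2*s') + 13*β*θ^2*s'/(12*σ^2))
    (hp : p = 1 + (β/32)*(θ/σ)^2) :
    16384*σ^2*Real.exp (-(p*(s'+1)^3)) < 9*β*θ^2*Real.exp (-E0) := by
  have hσ2 : (0:ℝ) < σ^2 := by positivity
  have hs0 : (0:ℝ) < s' := by linarith
  have h9 : (9:ℝ) < s'+1 := by linarith
  -- E0 bound
  have hx2 : (x0-θ)^2 < s'*θ^2 := by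
    have h1 : x0^2 < s'*θ^2 := by
      rw [div_lt_iff₀ (by positivity)] at hxs; linarith
    nlinarith
  have t1 : 4*β*(x0-θ)^2/(3*σ^2*s') ≤ 4*β*θ^2/(3*σ^2) := by
    rw [div_le_div_iff₀ (by positivity) (by positivity)]
    nlinarith [mul_le_mul_of_nonneg_left hx2.le (show (0:ℝ) ≤ 12*β*σ^2 by positivity)]
  have t2 : 4*β*θ^2/(3*σ^2) + 13*β*θ^2*s'/(12*σ^2) ≤ β*θ^2*(s'+1)^3/(32*σ^2) := by
    rw [show 4*β*θ^2/(3*σ^2) + 13*β*θ^2*s'/(12*σ^2)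
        = (4*β*θ^2/3 + 13*β*θ^2*s'/12)/σ^2 by ring,
      show β*θ^2*(s'+1)^3/(32*σ^2) = (β*θ^2*(s'+1)^3/32)/σ^2 by ring]
    gcongr
    have hpoly : 128 + 104*s' ≤ 3*(s'+1)^3 := by
      nlinarith [mul_nonneg (mul_nonneg (show (0:ℝ) ≤ s'-8 by linarith)
        (show (0:ℝ) ≤ s'+1 by linarith)) (show (0:ℝ) ≤ s'+1 by linarith)]
    nlinarith [mul_le_mul_of_nonneg_left hpoly (show (0:ℝ) ≤ β*θ^2 by positivity)]
  have hE0le : E0 ≤ (β/32)*(θ/σ)^2*(s'+1)^3 := by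
    rw [hE0, show (β/32)*(θ/σ)^2*(s'+1)^3 = β*θ^2*(s'+1)^3/(32*σ^2) by ring]
    linarith
  -- abstract Z
  have hZ : (729:ℝ) < (s'+1)^3 := by
    calc (729:ℝ) = 9^3 := by norm_num
      _ < (s'+1)^3 := pow_lt_pow_left₀ h9 (by norm_num) (by norm_num)
  have h8' : 8*σ^2 < (s'+1)*(β*θ^2) := by
    rw [div_lt_iff₀ (by positivity)] at hKs
    nlinarith [mul_pos hβ (pow_pos hθ 2)]
  clear hE0 t1 t2 hxs hKs hx2 
  generalize hZdef : (s'+1)^3 = Z at hZ hE0le ⊢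
  have hZ0 : (0:ℝ) < Z := by linarith
  have hD : Z ≤ p*Z - E0 := by
    rw [hp]; linarith [hE0le, hZ0]
  have hsplit : Real.exp (-E0) = Real.exp (p*Z - E0) * Real.exp (-(p*Z)) := by
    rw [← Real.exp_add]; ring_nf
  rw [hsplit]
  have hexpD : (Z/3)^3 ≤ Real.exp (p*Z - E0) :=
    (aux_cube_le_exp Z hZ0.le).trans (Real.exp_le_exp.mpr hD)
  have hkey : 16384*σ^2 < 9*β*θ^2 * ((Z/3)^3) := by
    have hZ3 : (729:ℝ)^3 < Z^3 := pow_lt_pow_left₀ hZ (by norm_num) (by norm_num)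
    rcases le_or_gt (σ^2) (β*θ^2) with hc | hc
    · have h := mul_le_mul hc hZ3.le (by positivity) (by positivity)
      linarith [h, hσ2]
    · have hcube := pow_lt_pow_left₀ h8' (by positivity) (show 3 ≠ 0 by norm_num)
      rw [mul_pow, mul_pow, hZdef] at hcube
      -- hcube : 8^3*(σ^2)^3 < Z*(β*θ^2)^3
      have h2 : (β*θ^2)^2 < (σ^2)^2 := pow_lt_pow_left₀ hc (by positivity) (by norm_num)
      have h3' : (β*θ^2)^3 ≤ (σ^2)^2*(β*θ^2) := by
        calc (β*θ^2)^3 = (β*θ^2)^2*(β*θ^2) := by ring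
          _ ≤ (σ^2)^2*(β*θ^2) := by
            exact mul_le_mul_of_nonneg_right h2.le (by positivity)
      have h3 : Z*(β*θ^2)^3 ≤ Z*((σ^2)^2*(β*θ^2)) :=
        mul_le_mul_of_nonneg_left h3' hZ0.le
      have h4' : 512*σ^2*((σ^2)^2) < Z*(β*θ^2)*((σ^2)^2) := by linarith [hcube, h3]
      have h4 : 512*σ^2 < Z*(β*θ^2) := lt_of_mul_lt_mul_right h4' (by positivity)
      have h5 : (729:ℝ)^2 < Z^2 := pow_lt_pow_left₀ hZ (by norm_num) (by norm_num)
      have h6 := mul_lt_mul'' h4 h5 (by positivity) (by positivity)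
      linarith [h6, hσ2]
  calc 16384*σ^2*Real.exp (-(p*Z))
      < 9*β*θ^2 * ((Z/3)^3) * Real.exp (-(p*Z)) :=
        mul_lt_mul_of_pos_right hkey (Real.exp_pos _)
    _ ≤ 9*β*θ^2 * Real.exp (p*Z - E0) * Real.exp (-(p*Z)) := by
        apply mul_le_mul_of_nonneg_right _ (Real.exp_pos _).le
        exact mul_le_mul_of_nonneg_left hexpD (by positivity)
    _ = 9*β*θ^2 * (Real.exp (p*Z - E0) * Real.exp (-(p*Z))) := by ring


/-- Main theorem through the explicit integral lower bound `g2`: for every `t > u`,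
`2β·e^{2βt}·g2(e^{2βt} − 1) > k·exp(−p·e^{6βt})`. -/
theorem stmt_19 (β σ x0 θ : ℝ) (hβ : 0 < β) (hσ : 0 < σ) (hθ : 0 < θ)
    (hx0 : θ < x0) (g2 : ℝ → ℝ)
    (hg2 : ∀ s' : ℝ, g2 s' =
      (|(θ - x0) * Real.sqrt (2 * β) / σ| / (2 * Real.pi)) *
        ∫ s in (2 * (Real.sqrt (s' + 1) - 1))..s',
          (((θ - x0) * Real.sqrt (2 * β) / σ + ((θ / 2) * Real.sqrt (2 * β) / σ) * s)
              - (Real.sqrt (2 * β) / σ) * (θ * Real.sqrt (s' + 1) - x0)) *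
            (s * (s' - s)) ^ (-(3 : ℝ) / 2) *
            Real.exp
              (-((θ - x0) * Real.sqrt (2 * β) / σ + ((θ / 2) * Real.sqrt (2 * β) / σ) * s) ^ 2
                  / (2 * s)
                - (((θ - x0) * Real.sqrt (2 * β) / σ + ((θ / 2) * Real.sqrt (2 * β) / σ) * s)
                    - (Real.sqrt (2 * β) / σ) * (θ * Real.sqrt (s' + 1) - x0)) ^ 2
                  / (2 * (s' - s))))
    (k p u : ℝ)
    (hk : k = (1024 * β / (9 * Real.pi)) * (x0 / θ - 1))
    (hp : p = 1 + (β / 32) * (θ / σ) ^ 2)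
    (hu : u = (1 / (2 * β)) *
      Real.log (1 + max (max 8 (1 + x0 ^ 2 / θ ^ 2)) (8 * σ ^ 2 / (β * θ ^ 2)))) :
    ∀ t : ℝ, u < t →
      2 * β * Real.exp (2 * β * t) * g2 (Real.exp (2 * β * t) - 1) >
        k * Real.exp (-p * Real.exp (6 * β * t)) := by
  intro t ht
  have hπ := Real.pi_pos
  obtain ⟨s', hs'⟩ : ∃ x : ℝ, x = Real.exp (2 * β * t) - 1 := ⟨_, rfl⟩
  rw [← hs']
  have hs1 : s' + 1 = Real.exp (2 * β * t) := by rw [hs']; ring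
  -- size facts coming from t > u
  have hMax8 : (8:ℝ) ≤ max (max 8 (1 + x0 ^ 2 / θ ^ 2)) (8 * σ ^ 2 / (β * θ ^ 2)) :=
    le_trans (le_max_left _ _) (le_max_left _ _)
  have hMaxx : 1 + x0 ^ 2 / θ ^ 2 ≤ max (max 8 (1 + x0 ^ 2 / θ ^ 2)) (8 * σ ^ 2 / (β * θ ^ 2)) :=
    le_trans (le_max_right _ _) (le_max_left _ _)
  have hMaxK : 8 * σ ^ 2 / (β * θ ^ 2)
      ≤ max (max 8 (1 + x0 ^ 2 / θ ^ 2)) (8 * σ ^ 2 / (β * θ ^ 2)) := le_max_right _ _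
  have hMlt : 1 + max (max 8 (1 + x0 ^ 2 / θ ^ 2)) (8 * σ ^ 2 / (β * θ ^ 2))
      < Real.exp (2 * β * t) := by
    have hMpos : (0:ℝ) < 1 + max (max 8 (1 + x0 ^ 2 / θ ^ 2)) (8 * σ ^ 2 / (β * θ ^ 2)) := by
      linarith
    have h2 : Real.log (1 + max (max 8 (1 + x0 ^ 2 / θ ^ 2)) (8 * σ ^ 2 / (β * θ ^ 2)))
        < 2 * β * t := by
      rw [hu] at ht
      have h3 := (mul_lt_mul_iff_right₀ (show (0:ℝ) < 2 * β by linarith)).mpr ht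
      have h4 : 2 * β * (1 / (2 * β) *
          Real.log (1 + max (max 8 (1 + x0 ^ 2 / θ ^ 2)) (8 * σ ^ 2 / (β * θ ^ 2))))
          = Real.log (1 + max (max 8 (1 + x0 ^ 2 / θ ^ 2)) (8 * σ ^ 2 / (β * θ ^ 2))) := by
        field_simp
      rw [h4] at h3
      linarith [h3]
    calc 1 + max (max 8 (1 + x0 ^ 2 / θ ^ 2)) (8 * σ ^ 2 / (β * θ ^ 2))
        = Real.exp (Real.log
            (1 + max (max 8 (1 + x0 ^ 2 / θ ^ 2)) (8 * σ ^ 2 / (β * θ ^ 2)))) :=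
          (Real.exp_log hMpos).symm
      _ < Real.exp (2 * β * t) := Real.exp_lt_exp.mpr h2
  have h8 : 8 < s' := by rw [hs']; linarith
  have hs0 : 0 < s' := by linarith
  have hxs : x0 ^ 2 / θ ^ 2 < s' := by rw [hs']; linarith
  have hKs : 8 * σ ^ 2 / (β * θ ^ 2) < s' := by rw [hs']; linarith
  -- sqrt (s'+1) = exp (βt)
  have hsq : Real.sqrt (s' + 1) = Real.exp (β * t) := by
    rw [hs1, show (2:ℝ) * β * t = β * t + β * t by ring, Real.exp_add]
    exact Real.sqrt_mul_self (Real.exp_pos _).le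
  have hEe : Real.exp (β * t) ^ 2 = s' + 1 := by
    rw [← hsq]; exact Real.sq_sqrt (by linarith)
  have hE3 : 3 < Real.exp (β * t) := by
    nlinarith [Real.exp_pos (β * t), hEe, h8]
  -- abbreviations
  obtain ⟨a1, ha1d⟩ : ∃ x : ℝ, x = (θ - x0) * Real.sqrt (2 * β) / σ := ⟨_, rfl⟩
  obtain ⟨b1, hb1d⟩ : ∃ x : ℝ, x = θ / 2 * Real.sqrt (2 * β) / σ := ⟨_, rfl⟩
  obtain ⟨a2, ha2d⟩ : ∃ x : ℝ, x = Real.sqrt (2 * β) / σ * (θ * Real.exp (β * t) - x0) :=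
    ⟨_, rfl⟩
  obtain ⟨st, hstd⟩ : ∃ x : ℝ, x = 2 * (Real.exp (β * t) - 1) := ⟨_, rfl⟩
  have hsqrt2β : 0 < Real.sqrt (2 * β) := Real.sqrt_pos.mpr (by linarith)
  have h2b : Real.sqrt (2 * β) ^ 2 = 2 * β := Real.sq_sqrt (by linarith)
  have hb1pos : 0 < b1 := by rw [hb1d]; positivity
  have ha1neg : a1 < 0 := by
    rw [ha1d]
    exact div_neg_of_neg_of_pos (mul_neg_of_neg_of_pos (by linarith) hsqrt2β) hσ
  have hb1sq : b1 ^ 2 = β * θ ^ 2 / (2 * σ ^ 2) := by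
    rw [hb1d, div_pow, mul_pow, h2b]; ring
  have ha1sq : a1 ^ 2 = 2 * β * (x0 - θ) ^ 2 / σ ^ 2 := by
    rw [ha1d, div_pow, mul_pow, h2b]; ring
  have hst0 : 0 < st := by rw [hstd]; linarith
  have hst58 : st ≤ 5 * s' / 8 := by
    rw [hstd]; nlinarith [hE3, hEe]
  have hkeyeq : a2 = a1 + b1 * st := by
    rw [ha2d, ha1d, hb1d, hstd]; ring
  have hlin : ∀ s : ℝ, a1 + b1 * s - a2 = b1 * (s - st) := fun s => by
    rw [hkeyeq]; ring
  have hcb : (Real.sqrt (2 * β) / σ) * b1 * σ ^ 2 = β * θ := by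
    rw [hb1d, show (Real.sqrt (2 * β) / σ) * (θ / 2 * Real.sqrt (2 * β) / σ) * σ ^ 2
      = Real.sqrt (2 * β) ^ 2 * (θ / 2) * (σ⁻¹ * σ) ^ 2 by ring, h2b,
      inv_mul_cancel₀ (ne_of_gt hσ)]
    ring
  -- specialize hg2
  have hg2s := hg2 s'
  rw [hsq] at hg2s
  rw [← ha1d, ← hb1d, ← ha2d, ← hstd] at hg2s
  obtain ⟨f, hf⟩ : ∃ f : ℝ → ℝ, f = fun s =>
      (a1 + b1 * s - a2) * (s * (s' - s)) ^ (-(3:ℝ) / 2) *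
        Real.exp (-(a1 + b1 * s) ^ 2 / (2 * s)
          - (a1 + b1 * s - a2) ^ 2 / (2 * (s' - s))) := ⟨_, rfl⟩
  rw [← hf] at hg2s
  have hfval : ∀ s : ℝ, f s = b1 * (s - st) * (s * (s' - s)) ^ (-(3:ℝ)/2) *
      Real.exp (-(a1 + b1 * s) ^ 2 / (2 * s) - (b1 * (s - st)) ^ 2 / (2 * (s' - s))) := by
    intro s
    rw [hf]
    simp only [hlin]
  -- the integral lower bound
  have hIlow := integral_bound b1 a1 st s' hb1pos ha1neg hst0 hst58 h8 f hfval
  -- the exponential bound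
  have hE0eq : 2 * a1 ^ 2 / (3 * s') + 13 * b1 ^ 2 * s' / 6
      = 4 * β * (x0 - θ) ^ 2 / (3 * σ ^ 2 * s') + 13 * β * θ ^ 2 * s' / (12 * σ ^ 2) := by
    rw [ha1sq, hb1sq]; ring
  have hexp := exp_arith β σ θ x0 s' (2 * a1 ^ 2 / (3 * s') + 13 * b1 ^ 2 * s' / 6) p
    hβ hσ hθ hx0 h8 hxs hKs hE0eq hp
  have hfin := final_arith β σ θ x0 s'
    (Real.exp (-(2 * a1 ^ 2 / (3 * s') + 13 * b1 ^ 2 * s' / 6)))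
    (Real.exp (-(p * (s' + 1) ^ 3)))
    (Real.sqrt (2 * β) / σ) b1 hβ hσ hθ hx0 h8 (Real.exp_pos _) (Real.exp_pos _) hcb hexp
  -- assemble
  have h6 : Real.exp (6 * β * t) = (s' + 1) ^ 3 := by
    rw [hs1, ← Real.exp_nat_mul]
    norm_num
    ring_nf
  rw [hg2s, ← hs1, h6, hk, show -p * (s' + 1) ^ 3 = -(p * (s' + 1) ^ 3) by ring]
  have habs2 : |a1| = (x0 - θ) * (Real.sqrt (2 * β) / σ) := by
    rw [abs_of_neg ha1neg, ha1d]; ring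
  have hchain : 2 * β * (s' + 1) * ((x0 - θ) * (Real.sqrt (2 * β) / σ) / (2 * Real.pi) *
        (b1 / (16 * s') * Real.exp (-(2 * a1 ^ 2 / (3 * s') + 13 * b1 ^ 2 * s' / 6))))
      ≤ 2 * β * (s' + 1) * (|a1| / (2 * Real.pi) * ∫ s in st..s', f s) := by
    apply mul_le_mul_of_nonneg_left _ (by positivity)
    rw [habs2]
    apply mul_le_mul_of_nonneg_left hIlow
    apply div_nonneg _ (by positivity)
    exact mul_nonneg (by linarith) (by positivity)
  exact lt_of_lt_of_le hfin hchain
end
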